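/- arXiv:1008.1011 — 4 statements merged into one kernel-verified Lean document; each statement's English description precedes it below -/
import Mathlib

section
/- Let G_L ≤ GL(7,ℂ) be the group generated by (12),(23),(34),(67) and the matrix A sending (a,b,c,d,e,f,g) to (a,b,g-c,g-d,1+a+b-f,1+a+b-e,g), and let Σ = ⟨(12),(23),(34),(67)⟩. Then Σ consists precisely of all permutation matrices contained in G_L, and there are exactly six double cosets ΣαΣ in G_L, with representatives I₇, A, [(123)(67)A]², [(123)(67)A]³, [(123)A]³, [(123)(67)A]⁴ and cardinalities 48, 576, 576, 576, 96, 48 respectively. -/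
set_option maxRecDepth 100000

/-- The permutation matrix corresponding to `σ ∈ S₇`. -/
def pm (σ : Equiv.Perm (Fin 7)) : Matrix (Fin 7) (Fin 7) ℂ :=
  Matrix.of fun i j => if i = σ j then 1 else 0

/-- The 3-cycle `(123)` (on the first three coordinates, `0 ↦ 1 ↦ 2 ↦ 0`). -/
def c123 : Equiv.Perm (Fin 7) := Equiv.swap 0 1 * Equiv.swap 1 2

/-- The matrix `A` sending `(a,b,c,d,e,f,g)` to `(a,b,g-c,g-d,1+a+b-f,1+a+b-e,g)`. -/
noncomputable def Amat : Matrix (Fin 7) (Fin 7) ℂ :=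
  !![1,0,0,0,0,0,0;
     0,1,0,0,0,0,0;
     0,0,-1,0,0,0,1;
     0,0,0,-1,0,0,1;
     0,0,-1,-1,1,0,1;
     0,0,-1,-1,0,1,1;
     0,0,0,0,0,0,1]

/-- `G_L = ⟨(12),(23),(34),(67),A⟩`. -/
noncomputable def GL_L : Submonoid (Matrix (Fin 7) (Fin 7) ℂ) :=
  Submonoid.closure
    {pm (Equiv.swap 0 1), pm (Equiv.swap 1 2), pm (Equiv.swap 2 3), pm (Equiv.swap 5 6), Amat}

/-- `Σ = ⟨(12),(23),(34),(67)⟩`. -/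
noncomputable def SigmaL : Submonoid (Matrix (Fin 7) (Fin 7) ℂ) :=
  Submonoid.closure
    {pm (Equiv.swap 0 1), pm (Equiv.swap 1 2), pm (Equiv.swap 2 3), pm (Equiv.swap 5 6)}

/-- The double coset `Σ α Σ`. -/
noncomputable def dCoset (α : Matrix (Fin 7) (Fin 7) ℂ) : Set (Matrix (Fin 7) (Fin 7) ℂ) :=
  {m | ∃ σ ∈ SigmaL, ∃ τ ∈ SigmaL, m = σ * α * τ}

/-- Representatives `I₇, A, [(123)(67)A]², [(123)(67)A]³, [(123)A]³, [(123)(67)A]⁴`. -/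
noncomputable def reps : Fin 6 → Matrix (Fin 7) (Fin 7) ℂ :=
  ![1, Amat, (pm c123 * pm (Equiv.swap 5 6) * Amat) ^ 2,
     (pm c123 * pm (Equiv.swap 5 6) * Amat) ^ 3,
     (pm c123 * Amat) ^ 3,
     (pm c123 * pm (Equiv.swap 5 6) * Amat) ^ 4]

/-- The corresponding double coset sizes `1·48, 12·48, 12·48, 12·48, 2·48, 1·48`. -/
def dcSizes : Fin 6 → ℕ := ![48, 576, 576, 576, 96, 48]

namespace DC

abbrev M7 := Matrix (Fin 7) (Fin 7) ℤ
abbrev MC := Matrix (Fin 7) (Fin 7) ℂ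

/-- integer permutation matrix -/
def pmZ (σ : Equiv.Perm (Fin 7)) : M7 := Matrix.of fun i j => if i = σ j then 1 else 0

/-- digit of a base-5 code -/
def dig (n p : ℕ) : ℕ := n / 5^p % 5

/-- digit of a base-7 permutation table -/
def dig7 (t j : ℕ) : ℕ := t / 7^j % 7

/-- decode a base-5 code to an integer matrix (entry = digit - 2) -/
def toM (n : ℕ) : M7 := Matrix.of fun i j => (dig n (7*i.val+j.val) : ℤ) - 2

lemma dig_lt (n p : ℕ) : dig n p < 5 := Nat.mod_lt _ (by norm_num)
lemma dig7_apply (t j : ℕ) : dig7 t j = t / 7^j % 7 := rfl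

/-- build a code from low digits: `bld f k = ∑_{p<k} f p * 5^p` -/
def bld (f : ℕ → ℕ) : ℕ → ℕ
  | 0 => 0
  | k+1 => bld f k + f k * 5^k

lemma bld_lt (f : ℕ → ℕ) (hf : ∀ p, f p < 5) : ∀ k, bld f k < 5^k := by
  intro k
  induction k with
  | zero => simp [bld]
  | succ k ih =>
    have h1 : f k * 5^k ≤ 4 * 5^k := Nat.mul_le_mul_right _ (by have := hf k; omega)
    have h2 : 5^(k+1) = 5 * 5^k := by ring
    simp only [bld]; omega

lemma dig_bld (f : ℕ → ℕ) (hf : ∀ p, f p < 5) : ∀ k q, q < k → dig (bld f k) q = f q := by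
  intro k
  induction k with
  | zero => omega
  | succ k ih =>
    intro q hq
    rcases Nat.lt_or_ge q k with h | h
    · -- adding f k * 5^k doesn't change digit q < k
      have hk : 5^k = 5^(q+1) * 5^(k-q-1) := by
        rw [← pow_add]; congr 1; omega
      have : bld f (k+1) = bld f k + (f k * 5^(k-q-1) * 5) * 5^q := by
        simp only [bld, hk]; ring
      rw [this, dig, Nat.add_mul_div_right _ _ (pow_pos (by norm_num : (0:ℕ) < 5) q)]
      have : f k * 5^(k-q-1) * 5 = (f k * 5^(k-q-1)) * 5 := by ring
      rw [this, Nat.add_mul_mod_self_right]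
      exact ih q h
    · have hqk : q = k := by omega
      subst hqk
      have hb := bld_lt f hf q
      simp only [bld, dig]
      rw [Nat.add_mul_div_right _ _ (pow_pos (by norm_num : (0:ℕ) < 5) q),
        Nat.div_eq_of_lt hb, Nat.zero_add, Nat.mod_eq_of_lt (hf q)]

/-- column permutation: result has entry (i,j) = entry (i, t j) of `n` -/
def colPermN (t n : ℕ) : ℕ := bld (fun p => dig n (7*(p/7) + dig7 t (p%7))) 49

/-- row permutation by the *inverse* table: entry (i,j) = entry (t i, j) of `n` -/
def rowPermN (t n : ℕ) : ℕ := bld (fun p => dig n (7 * dig7 t (p/7) + p%7)) 49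

lemma fv0 : ((0 : Fin 7) : ℕ) = 0 := rfl
lemma fv1 : ((1 : Fin 7) : ℕ) = 1 := rfl
lemma fv2 : ((2 : Fin 7) : ℕ) = 2 := rfl
lemma fv3 : ((3 : Fin 7) : ℕ) = 3 := rfl
lemma fv4 : ((4 : Fin 7) : ℕ) = 4 := rfl
lemma fv5 : ((5 : Fin 7) : ℕ) = 5 := rfl
lemma fv6 : ((6 : Fin 7) : ℕ) = 6 := rfl

lemma toM_apply (n : ℕ) (i j : Fin 7) : toM n i j = (dig n (7*i.val+j.val) : ℤ) - 2 := rfl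

lemma mul_pmZ_apply (M : M7) (σ : Equiv.Perm (Fin 7)) (i j : Fin 7) :
    (M * pmZ σ) i j = M i (σ j) := by
  simp only [Matrix.mul_apply, pmZ, Matrix.of_apply]
  rw [Finset.sum_eq_single (σ j)]
  · simp
  · intro b _ hb; simp [hb]
  · simp

lemma pmZ_mul_apply (σ : Equiv.Perm (Fin 7)) (M : M7) (i j : Fin 7) :
    (pmZ σ * M) i j = M (σ⁻¹ i) j := by
  simp only [Matrix.mul_apply, pmZ, Matrix.of_apply]
  rw [Finset.sum_eq_single (σ⁻¹ i)]
  · simp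
  · intro b _ hb
    have : ¬ i = σ b := by
      intro h; apply hb; rw [h]; simp
    simp [this]
  · simp

lemma toM_colPermN (t n : ℕ) (σ : Equiv.Perm (Fin 7))
    (ht : ∀ j : Fin 7, dig7 t j.val = (σ j).val) :
    toM (colPermN t n) = toM n * pmZ σ := by
  ext i j
  rw [mul_pmZ_apply]
  rw [toM_apply, toM_apply, colPermN]
  rw [dig_bld _ (fun p => dig_lt _ _) 49 (7*i.val+j.val) (by omega)]
  have h1 : (7*i.val+j.val)/7 = i.val := by omega
  have h2 : (7*i.val+j.val)%7 = j.val := by omega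
  rw [h1, h2, ht j]

lemma toM_rowPermN (t n : ℕ) (σ : Equiv.Perm (Fin 7))
    (ht : ∀ i : Fin 7, dig7 t i.val = (σ⁻¹ i).val) :
    toM (rowPermN t n) = pmZ σ * toM n := by
  ext i j
  rw [pmZ_mul_apply]
  rw [toM_apply, toM_apply, rowPermN]
  rw [dig_bld _ (fun p => dig_lt _ _) 49 (7*i.val+j.val) (by omega)]
  have h1 : (7*i.val+j.val)/7 = i.val := by omega
  have h2 : (7*i.val+j.val)%7 = j.val := by omega
  rw [h1, h2, ht i]

/-- 7-term sum -/
def S7 (f : ℕ → ℕ) : ℕ := f 0 + f 1 + f 2 + f 3 + f 4 + f 5 + f 6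

/-- check that `toM a * toM b = toM c` holds at positions `p < k` -/
def mulOK (a b c : ℕ) : ℕ → Bool
  | 0 => true
  | p+1 => mulOK a b c p &&
      (S7 (fun t => dig a (7*(p/7)+t) * dig b (7*t+p%7)) + 30 ==
       dig c p + 2 * S7 (fun t => dig a (7*(p/7)+t)) + 2 * S7 (fun t => dig b (7*t+p%7)))

lemma mulOK_spec (a b c : ℕ) : ∀ k, mulOK a b c k = true → ∀ p, p < k →
    S7 (fun t => dig a (7*(p/7)+t) * dig b (7*t+p%7)) + 30 =
      dig c p + 2 * S7 (fun t => dig a (7*(p/7)+t)) + 2 * S7 (fun t => dig b (7*t+p%7)) := by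
  intro k
  induction k with
  | zero => omega
  | succ k ih =>
    intro h p hp
    simp only [mulOK, Bool.and_eq_true, beq_iff_eq] at h
    rcases Nat.lt_or_ge p k with h' | h'
    · exact ih h.1 p h'
    · have : p = k := by omega
      subst this; exact h.2

lemma toM_mul (a b c : ℕ) (h : mulOK a b c 49 = true) : toM a * toM b = toM c := by
  have hs := mulOK_spec a b c 49 h
  ext i j
  have hp := hs (7*i.val+j.val) (by omega)
  have h1 : (7*i.val+j.val)/7 = i.val := by omega
  have h2 : (7*i.val+j.val)%7 = j.val := by omega
  rw [h1, h2] at hp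
  simp only [S7] at hp
  rw [Matrix.mul_apply, Fin.sum_univ_seven]
  simp only [toM, Matrix.of_apply]
  have hc : ((dig a (7*i.val+0) * dig b (7*0+j.val) + dig a (7*i.val+1) * dig b (7*1+j.val) +
      dig a (7*i.val+2) * dig b (7*2+j.val) + dig a (7*i.val+3) * dig b (7*3+j.val) +
      dig a (7*i.val+4) * dig b (7*4+j.val) + dig a (7*i.val+5) * dig b (7*5+j.val) +
      dig a (7*i.val+6) * dig b (7*6+j.val)) + 30 : ℤ) =
      dig c (7*i.val+j.val) + 2 * (dig a (7*i.val+0) + dig a (7*i.val+1) + dig a (7*i.val+2) +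
      dig a (7*i.val+3) + dig a (7*i.val+4) + dig a (7*i.val+5) + dig a (7*i.val+6)) +
      2 * (dig b (7*0+j.val) + dig b (7*1+j.val) + dig b (7*2+j.val) + dig b (7*3+j.val) +
      dig b (7*4+j.val) + dig b (7*5+j.val) + dig b (7*6+j.val)) := by
    exact_mod_cast hp
  push_cast
  norm_num [fv0, fv1, fv2, fv3, fv4, fv5, fv6]
  norm_num at hc
  linear_combination hc

lemma pmZ_one : pmZ 1 = 1 := by
  ext i j
  simp [pmZ, Matrix.one_apply]
  rfl

lemma pmZ_mul (a b : Equiv.Perm (Fin 7)) : pmZ (a * b) = pmZ a * pmZ b := by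
  ext i j
  rw [mul_pmZ_apply]
  simp [pmZ]
  rfl

lemma pmZ_inj : Function.Injective pmZ := by
  intro a b h
  refine Equiv.ext fun j => ?_
  by_contra hne
  have h2 : pmZ a (a j) j = pmZ b (a j) j := by rw [h]
  simp only [pmZ, Matrix.of_apply, if_pos rfl, if_neg hne] at h2
  simp at h2

/-- cast to ℂ -/
noncomputable def fC : M7 →+* MC := (Int.castRingHom ℂ).mapMatrix

lemma fC_apply (M : M7) (i j : Fin 7) : fC M i j = (M i j : ℂ) := rfl

lemma fC_inj : Function.Injective fC := by
  intro a b h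
  ext i j
  have h2 : fC a i j = fC b i j := by rw [h]
  rw [fC_apply, fC_apply] at h2
  exact_mod_cast h2

lemma pm_eq (σ : Equiv.Perm (Fin 7)) : pm σ = fC (pmZ σ) := by
  ext i j
  simp only [pm, fC_apply, pmZ, Matrix.of_apply, apply_ite (fun x : ℤ => (x : ℂ))]
  norm_num

lemma pm_one : pm 1 = 1 := by rw [pm_eq, pmZ_one, map_one]

lemma pm_mul (a b : Equiv.Perm (Fin 7)) : pm (a * b) = pm a * pm b := by
  rw [pm_eq, pm_eq, pm_eq, pmZ_mul, map_mul]

lemma pm_inj : Function.Injective pm := by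
  intro a b h
  apply pmZ_inj
  apply fC_inj
  rw [← pm_eq, ← pm_eq, h]

/-- decoded matrix over ℂ -/
noncomputable def FN (n : ℕ) : MC := fC (toM n)

/-- the four generators of Σ -/
def sw : Fin 4 → Equiv.Perm (Fin 7) := ![Equiv.swap 0 1, Equiv.swap 1 2, Equiv.swap 2 3, Equiv.swap 5 6]

/-- word product -/
def wp (w : List (Fin 4)) : Equiv.Perm (Fin 7) := (w.map sw).prod

/-- the group Σ as permutations -/
def Hc : Submonoid (Equiv.Perm (Fin 7)) :=
  Submonoid.closure {Equiv.swap 0 1, Equiv.swap 1 2, Equiv.swap 2 3, Equiv.swap 5 6}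

lemma sw_mem (t : Fin 4) : sw t ∈ Hc := by
  fin_cases t <;> exact Submonoid.subset_closure (by simp [sw])

lemma wp_nil : wp [] = 1 := rfl

lemma wp_cons (t : Fin 4) (w : List (Fin 4)) : wp (t :: w) = sw t * wp w := by
  simp [wp]

lemma wp_append (u v : List (Fin 4)) : wp (u ++ v) = wp u * wp v := by
  simp [wp]

lemma wp_mem (w : List (Fin 4)) : wp w ∈ Hc := by
  induction w with
  | nil => exact Submonoid.one_mem _
  | cons t w ih => rw [wp_cons]; exact Submonoid.mul_mem _ (sw_mem t) ih

lemma sw_invol (t : Fin 4) : sw t * sw t = 1 := by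
  fin_cases t <;> simp [sw, Equiv.swap_mul_self]

lemma wp_reverse_mul (w : List (Fin 4)) : wp w.reverse * wp w = 1 := by
  induction w with
  | nil => simp [wp_nil]
  | cons t w ih =>
    rw [wp_cons, List.reverse_cons, wp_append]
    have : wp [t] = sw t := by simp [wp]
    rw [this, mul_assoc, ← mul_assoc (sw t), sw_invol, one_mul, ih]

lemma wp_reverse (w : List (Fin 4)) : wp w.reverse = (wp w)⁻¹ := by
  have := wp_reverse_mul w
  exact eq_inv_of_mul_eq_one_left this

lemma wp_inv_mem (w : List (Fin 4)) : (wp w)⁻¹ ∈ Hc := by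
  rw [← wp_reverse]; exact wp_mem _

/-- Σ (the matrix submonoid) is the image of Hc under pm -/
noncomputable def pmHom : Equiv.Perm (Fin 7) →* MC :=
  { toFun := pm, map_one' := pm_one, map_mul' := pm_mul }

lemma SigmaL_eq : SigmaL = Hc.map pmHom := by
  rw [Hc, MonoidHom.map_mclosure, SigmaL]
  congr 1
  simp only [Set.image_insert_eq, Set.image_singleton]
  rfl

lemma mem_SigmaL (m : MC) : m ∈ SigmaL ↔ ∃ s ∈ Hc, pm s = m := by
  rw [SigmaL_eq]
  exact Submonoid.mem_map

lemma pm_mem_SigmaL {s : Equiv.Perm (Fin 7)} (hs : s ∈ Hc) : pm s ∈ SigmaL :=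
  (mem_SigmaL _).2 ⟨s, hs, rfl⟩

/-- block structure subgroup: preserves {0,1,2,3}, fixes 4, preserves {5,6} -/
def HP : Submonoid (Equiv.Perm (Fin 7)) where
  carrier := {σ | (∀ j ∈ ({0,1,2,3} : Finset (Fin 7)), σ j ∈ ({0,1,2,3} : Finset (Fin 7))) ∧
      σ 4 = 4 ∧ (∀ j ∈ ({5,6} : Finset (Fin 7)), σ j ∈ ({5,6} : Finset (Fin 7)))}
  one_mem' := by refine ⟨fun j hj => ?_, rfl, fun j hj => ?_⟩ <;> simpa using hj
  mul_mem' := by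
    rintro a b ⟨ha1, ha2, ha3⟩ ⟨hb1, hb2, hb3⟩
    refine ⟨fun j hj => ha1 _ (hb1 _ hj), ?_, fun j hj => ha3 _ (hb3 _ hj)⟩
    show a (b 4) = 4
    rw [hb2, ha2]

lemma Hc_le_HP : Hc ≤ HP := by
  rw [Hc]
  apply Submonoid.closure_le.2
  intro x hx
  simp only [Set.mem_insert_iff, Set.mem_singleton_iff] at hx
  rcases hx with rfl | rfl | rfl | rfl <;> exact ⟨by decide, by decide, by decide⟩

/-- column code -/
def colc (M : M7) (j : Fin 7) : ℤ := ∑ i : Fin 7, (M i j + 2) * 5^(i.val)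

/-- separating invariant of right Σ-cosets -/
def phiM (M : M7) : ℤ × ℤ × ℤ :=
  (∑ j ∈ ({0,1,2,3} : Finset (Fin 7)), (colc M j)^3, colc M 4,
   ∑ j ∈ ({5,6} : Finset (Fin 7)), (colc M j)^3)

lemma colc_mul_pmZ (M : M7) (σ : Equiv.Perm (Fin 7)) (j : Fin 7) :
    colc (M * pmZ σ) j = colc M (σ j) := by
  unfold colc
  apply Finset.sum_congr rfl
  intro i _
  rw [mul_pmZ_apply]

lemma sum_block_perm (M : M7) (σ : Equiv.Perm (Fin 7)) (B : Finset (Fin 7))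
    (hB : ∀ j ∈ B, σ j ∈ B) :
    ∑ j ∈ B, (colc M (σ j))^3 = ∑ j ∈ B, (colc M j)^3 := by
  have himg : B.image σ = B := by
    apply Finset.eq_of_subset_of_card_le
    · intro x hx
      simp only [Finset.mem_image] at hx
      obtain ⟨a, ha, rfl⟩ := hx
      exact hB a ha
    · rw [Finset.card_image_of_injective _ σ.injective]
  calc ∑ j ∈ B, (colc M (σ j))^3 = ∑ j ∈ B.image σ, (colc M j)^3 := by
        rw [Finset.sum_image (fun a _ b _ h => σ.injective h)]
      _ = ∑ j ∈ B, (colc M j)^3 := by rw [himg]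

lemma phiM_invariant (M : M7) {σ : Equiv.Perm (Fin 7)} (hσ : σ ∈ HP) :
    phiM (M * pmZ σ) = phiM M := by
  obtain ⟨h1, h2, h3⟩ := hσ
  have e : ∀ j, colc (M * pmZ σ) j = colc M (σ j) := colc_mul_pmZ M σ
  have c1 : ∑ j ∈ ({0,1,2,3} : Finset (Fin 7)), (colc (M * pmZ σ) j)^3
      = ∑ j ∈ ({0,1,2,3} : Finset (Fin 7)), (colc M j)^3 := by
    rw [Finset.sum_congr rfl fun j _ => by rw [e j]]
    exact sum_block_perm M σ _ h1
  have c3 : ∑ j ∈ ({5,6} : Finset (Fin 7)), (colc (M * pmZ σ) j)^3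
      = ∑ j ∈ ({5,6} : Finset (Fin 7)), (colc M j)^3 := by
    rw [Finset.sum_congr rfl fun j _ => by rw [e j]]
    exact sum_block_perm M σ _ h3
  simp only [phiM, c1, c3, e 4, h2]

def rho : Fin 40 → ℕ := ![12434506970772054105997238159570313,13820212645758902207726512074745281,13143775961204458025789256215370281,16662338550510842350816722035682781,13143775961204458025807536010682781,16662338550510842350835001830995281,13139183448940720468778605346620281,13143775961204459455823869018495281,16662338550510843780851334838807781,13139183448940721898794938354432781,13139183448940721898889535532245281,13143775961204458025807536252476561,16662338550510842350835002072789061,13139183448940720468778605588414061,13143775961204459455823869260289061,16662338550510843780851335080601561,13139183448940721898794938596226561,13139183448940720468873788696226561,13139183448940729335070419555601561,13143775961204459455842783813101561,16662338550510843780870249633414061,12434597467380825370645371703726561,16662329472909931033944932250601561,12434552428626697522402573852164061,13143721844849418860674668578726561,13139183448940721898908425913101561,13139183448940729335088723764664061,12434552428626697522497146616226561,13143721844849418860769241342789061,12434552428626704958677444467789061,13143721844849426296949539194351561,13139183448940721898889536984882937,13139183448940721898908427123945437,13139183448940729335088724975507937,12434552428626697522497147827070437,13143721844849418860769242553632937,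12434552428626704958677445678632937,13143721844849426296949540405195437,12434552428626704958772653200195437,13143721844849426297044747926757937]

def rhoInvN : Fin 40 → ℕ := ![12434506970772054105997238159570313,13820212645758902207726512074745281,13143775961204458025789256215370281,13143739580950719860811228871620281,13139228487694848317003245471620281,13139192107441110152025218127870281,13139183448940720468778605346620281,13116491120146799773073191760682681,13116454739893061608095164416932681,13116446081392671924848551635682681,13116446023184265943784708862245161,13138318992992926377153367541620281,13138282612739188212175340197870281,13138273954238798528928727416620281,13115581625444877833223313830682681,13115545245191139668245286486932681,13115536586690749984998673705682681,13138273896030392557401505735370281,13115536237440314155835343618182681,13111034151935268133973924182245161,13110997771681529968995896838495161,12434597467380825370645371703726561,9592390143621025174875107055276561,12434552428626697522402573852164061,9592381485120635491610336547464061,13110989054972734304685441282245161,13110988763930704447049332875995161,12434552370418291541338731077164061,9592381426912229510546493772464061,12434552079376261683702622670914061,9592381135870199652910385366214061,13115536516840662807722062377557657,13110989043331053108472672727557657,13110988752289023250836564321307657,12434552358776610345125962522476557,9592381415270548314333725217776557,12434552067734580487489854116226557,9592381124228518456697616811526557,12434552009526174515962632436539037,9592381066020112485170395131839037]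

def blk : Fin 40 → Fin 6 := ![0,5,3,3,3,3,2,3,3,2,2,3,3,2,3,3,2,2,2,3,3,4,4,1,1,2,2,1,1,1,1,2,2,2,1,1,1,1,1,1]

def W48 : Fin 48 → List (Fin 4) := ![[],[3],[2],[2,3],[1],[1,3],[1,2],[1,2,3],[2,1],[2,1,3],[1,2,1],[1,2,1,3],[0],[0,3],[0,2],[0,2,3],[0,1],[0,1,3],[0,1,2],[0,1,2,3],[0,2,1],[0,2,1,3],[0,1,2,1],[0,1,2,1,3],[1,0],[1,0,3],[1,0,2],[1,0,2,3],[0,1,0],[0,1,0,3],[0,1,0,2],[0,1,0,2,3],[1,0,2,1],[1,0,2,1,3],[0,1,0,2,1],[0,1,0,2,1,3],[2,1,0],[2,1,0,3],[1,2,1,0],[1,2,1,0,3],[0,2,1,0],[0,2,1,0,3],[0,1,2,1,0],[0,1,2,1,0,3],[1,0,2,1,0],[1,0,2,1,0,3],[0,1,0,2,1,0],[0,1,0,2,1,0,3]]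

def tab48 : Fin 48 → ℕ := ![800667,699825,800373,699531,800625,699783,800037,699195,800289,699447,799995,699153,800661,699819,800367,699525,800577,699735,799695,698853,800241,699399,799653,698811,800613,699771,800025,699183,800571,699729,799689,698847,799899,699057,799605,698763,800271,699429,799977,699135,800229,699387,799641,698799,799893,699051,799599,698757]

def itab48 : Fin 48 → ℕ := ![800667,699825,800373,699531,800625,699783,800289,699447,800037,699195,799995,699153,800661,699819,800367,699525,800613,699771,800271,699429,800025,699183,799977,699135,800577,699735,800241,699399,800571,699729,800229,699387,799899,699057,799893,699051,799695,698853,799653,698811,799689,698847,799641,698799,799605,698763,799599,698757]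

def succTab : Fin 4 → Fin 48 → Fin 48 := ![![12,13,14,15,16,17,18,19,20,21,22,23,0,1,2,3,4,5,6,7,8,9,10,11,28,29,30,31,24,25,26,27,34,35,32,33,40,41,42,43,36,37,38,39,46,47,44,45],![4,5,6,7,0,1,2,3,10,11,8,9,24,25,26,27,28,29,30,31,32,33,34,35,12,13,14,15,16,17,18,19,20,21,22,23,38,39,36,37,44,45,46,47,40,41,42,43],![2,3,0,1,8,9,10,11,4,5,6,7,14,15,12,13,20,21,22,23,16,17,18,19,36,37,38,39,40,41,42,43,44,45,46,47,24,25,26,27,28,29,30,31,32,33,34,35],![1,0,3,2,5,4,7,6,9,8,11,10,13,12,15,14,17,16,19,18,21,20,23,22,25,24,27,26,29,28,31,30,33,32,35,34,37,36,39,38,41,40,43,42,45,44,47,46]]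

def tabG : Fin 4 → ℕ := ![800661,800625,800373,699825]

def ckP : Fin 4 → Fin 40 → Fin 40 := ![![0,1,2,3,11,12,13,14,15,16,31,4,5,6,7,8,9,17,18,19,20,21,22,23,24,32,33,34,35,36,37,10,25,26,27,28,29,30,38,39],![0,1,4,5,2,3,6,7,8,10,9,11,12,17,19,20,25,13,26,14,15,21,22,27,28,16,18,23,24,29,30,32,31,33,34,35,38,39,36,37],![0,1,2,3,7,8,9,4,5,6,10,14,15,16,11,12,13,18,17,19,20,21,22,23,24,26,25,29,30,27,28,31,33,32,36,37,34,35,38,39],![0,1,3,2,5,4,6,8,7,9,10,12,11,13,15,14,16,17,18,20,19,22,21,24,23,25,26,28,27,30,29,31,32,33,35,34,37,36,39,38]]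

def cnP : Fin 4 → Fin 40 → Fin 48 := ![![12,2,2,2,0,0,0,0,0,0,0,0,0,0,0,0,0,1,1,12,12,12,12,12,12,0,0,0,0,0,0,0,0,0,0,0,0,0,2,2],![4,4,0,0,0,0,1,12,12,0,0,2,2,0,0,0,0,0,0,0,0,4,4,0,0,0,0,0,0,2,2,0,0,1,12,12,0,0,0,0],![2,12,12,12,0,0,0,0,0,0,1,0,0,0,0,0,0,0,0,2,2,2,2,2,2,0,0,0,0,0,0,1,0,0,0,0,0,0,12,12],![1,1,0,0,0,0,4,0,0,4,4,0,0,4,0,0,4,4,4,0,0,0,0,0,0,4,4,0,0,0,0,4,4,4,0,0,0,0,0,0]]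

def ckA : Fin 40 → Fin 40 := ![38,3,2,1,9,8,7,6,5,4,10,16,15,14,13,12,11,18,17,24,22,23,20,21,19,30,28,29,26,27,25,31,37,35,36,33,34,32,0,39]

def cnA : Fin 40 → Fin 48 := ![44,13,13,13,4,4,4,4,4,4,29,4,4,4,4,4,4,10,10,2,2,2,2,2,2,4,4,4,4,4,4,29,4,4,4,4,4,4,34,13]

def rrN : Fin 6 → ℕ := ![12434506970772054105997238159570313,12434552009526181906556930542382813,13138273535138276952505119016620157,16662338480660755184984056018182781,12434597467380825370645371703726561,13820212645758902209633836301307681]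

def d4n1 : Fin 40 → Fin 48 := ![0,0,1,0,5,4,2,9,8,0,4,17,16,14,21,20,12,26,38,33,32,0,1,32,33,24,36,20,21,16,17,16,28,40,8,9,4,5,0,1]

def d4n2 : Fin 40 → Fin 48 := ![0,14,28,28,28,28,44,28,28,44,44,28,28,44,28,28,44,44,44,28,28,0,0,44,44,44,44,44,44,44,44,44,44,44,44,44,44,44,44,44]

def phiL : Fin 40 → ℤ × ℤ × ℤ := ![(239125426280516,39687,238632675853906),(27199008835956,39687,661536566222714),(101718432719956,39687,441922389331914),(37409958844956,39687,618848157419414),(101622199768956,39687,442127394526454),(37357296393956,39687,619053162613954),(122966632501956,39687,399438985723154),(101141621909956,39687,443154526127154),(37094121034956,39687,620080294214654),(122399037062956,39687,400466117323854),(122285936088756,39687,400671122518394),(101602948459780,39687,442168412401170),(37346762784780,39687,619094180488670),(122945428790380,39687,399480003597870),(101122370600780,39687,443195684437870),(37083587425780,39687,620121452525370),(122377833351380,39687,400507275634570),(122839493901300,39687,399685008792410),(121744312760900,39687,401739412429810),(101026137649780,39687,443401560335610),(37030924974780,39687,620327328423110),(175545561533780,39687,317387415700810),(47241874983780,39687,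582781826375810),(207934507008380,39687,274699006897510),(143626033133380,39687,363167649485010),(122158797488100,39687,400918156726850),(121631211786700,39687,401945288327550),(207768133596100,39687,274904012092050),(143503230221100,39687,363372654679550),(206936127814700,39687,275931143692750),(142888626939700,39687,364399786280250),(122242128883076,39687,400753298703826),(122136193993996,39687,400959174601566),(121608608292596,39687,401986446638266),(207734859999596,39687,274945029966766),(143478674324596,39687,363413672554266),(206902854218196,39687,275972302003466),(142864071043196,39687,364440944590966),(206736480805916,39687,276178177901206),(142741268130916,39687,364646820488706)]

def rrK : Fin 6 → Fin 40 := ![0,38,9,3,21,1]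

def rrE : Fin 6 → Fin 48 := ![0,44,44,28,0,14]

def AN : ℕ := 12434552009526181906556930542382813

def idN : ℕ := 12434506970772054105997238159570313


lemma d_linkG : ∀ t : Fin 4, ∀ j : Fin 7, dig7 (tabG t) j.val = ((sw t) j).val := by decide +kernel

lemma d_linkT : ∀ n : Fin 48, ∀ j : Fin 7, dig7 (tab48 n) j.val = (wp (W48 n) j).val := by decide +kernel

lemma d_linkI : ∀ n : Fin 48, ∀ j : Fin 7, dig7 (itab48 n) j.val < 7 ∧ dig7 (tab48 n) (dig7 (itab48 n) j.val) = j.val := by decide +kernel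

lemma d_succ : ∀ t : Fin 4, ∀ n : Fin 48, ∀ j : Fin 7, dig7 (tabG t) (dig7 (tab48 n) j.val) = dig7 (tab48 (succTab t n)) j.val := by decide +kernel

lemma d_sep48 : ∀ n n' : Fin 48, (∀ j : Fin 7, dig7 (tab48 n) j.val = dig7 (tab48 n') j.val) → n = n' := by decide +kernel

lemma d_D1 : ∀ t : Fin 4, ∀ k : Fin 40, rowPermN (tabG t) (rho k) = colPermN (tab48 (cnP t k)) (rho (ckP t k)) ∧ blk (ckP t k) = blk k := by decide +kernel

lemma d_D2 : ∀ k : Fin 40, mulOK AN (rho k) (colPermN (tab48 (cnA k)) (rho (ckA k))) 49 = true := by decide +kernel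

lemma d_inv : ∀ k : Fin 40, mulOK (rhoInvN k) (rho k) idN 49 = true := by decide +kernel

lemma d_D4 : ∀ k : Fin 40, rowPermN (itab48 (d4n1 k)) (rrN (blk k)) = colPermN (tab48 (d4n2 k)) (rho k) := by decide +kernel

lemma d_rr : ∀ i : Fin 6, rrN i = colPermN (tab48 (rrE i)) (rho (rrK i)) ∧ blk (rrK i) = i := by decide +kernel

lemma d_phi : ∀ k : Fin 40, phiM (toM (rho k)) = phiL k := by decide +kernel

lemma d_phisep : ∀ k k' : Fin 40, phiL k = phiL k' → k = k' := by decide +kernel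

lemma d_entries : ∀ k : Fin 40, k = 0 ∨ ∃ p : Fin 49, ¬(dig (rho k) p.val = 2 ∨ dig (rho k) p.val = 3) := by decide +kernel

lemma d_rho0 : rho 0 = idN := by decide +kernel

lemma d_id : toM idN = 1 := by decide +kernel

lemma bridge_col (n : Fin 48) (a : ℕ) : toM (colPermN (tab48 n) a) = toM a * pmZ (wp (W48 n)) :=
  toM_colPermN _ _ _ (fun j => d_linkT n j)

lemma sw_inv (t : Fin 4) : (sw t)⁻¹ = sw t := inv_eq_of_mul_eq_one_right (sw_invol t)

lemma bridge_rowG (t : Fin 4) (a : ℕ) : toM (rowPermN (tabG t) a) = pmZ (sw t) * toM a := by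
  apply toM_rowPermN
  intro i
  rw [sw_inv]
  exact d_linkG t i

lemma bridge_rowI (n : Fin 48) (a : ℕ) : toM (rowPermN (itab48 n) a) = pmZ (wp (W48 n)) * toM a := by
  apply toM_rowPermN
  intro i
  obtain ⟨hlt, heq⟩ := d_linkI n i
  have h1 : wp (W48 n) ⟨dig7 (itab48 n) i.val, hlt⟩ = i := by
    apply Fin.ext
    rw [← d_linkT n ⟨_, hlt⟩]
    exact heq
  have h2 : (⟨dig7 (itab48 n) i.val, hlt⟩ : Fin 7) = (wp (W48 n))⁻¹ i :=
    (Equiv.eq_symm_apply _).2 h1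
  calc dig7 (itab48 n) i.val = (⟨dig7 (itab48 n) i.val, hlt⟩ : Fin 7).val := rfl
    _ = ((wp (W48 n))⁻¹ i).val := by rw [h2]

lemma succ_wp (t : Fin 4) (n : Fin 48) : sw t * wp (W48 n) = wp (W48 (succTab t n)) := by
  refine Equiv.ext fun j => Fin.ext ?_
  rw [← d_linkT (succTab t n) j]
  show ((sw t) (wp (W48 n) j)).val = _
  rw [← d_linkG t (wp (W48 n) j), ← d_linkT n j, d_succ t n j]

lemma cov48 {s : Equiv.Perm (Fin 7)} (hs : s ∈ Hc) : ∃ n : Fin 48, s = wp (W48 n) := by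
  obtain ⟨l, hl, rfl⟩ := Submonoid.exists_list_of_mem_closure hs
  clear hs
  induction l with
  | nil => exact ⟨0, rfl⟩
  | cons g l ih =>
    obtain ⟨n, hn⟩ := ih (fun y hy => hl y (List.mem_cons_of_mem _ hy))
    have hg := hl g (List.mem_cons_self)
    simp only [Set.mem_insert_iff, Set.mem_singleton_iff] at hg
    rw [List.prod_cons, hn]
    rcases hg with rfl | rfl | rfl | rfl
    · exact ⟨succTab 0 n, by rw [show Equiv.swap 0 1 = sw 0 from rfl, succ_wp]⟩
    · exact ⟨succTab 1 n, by rw [show Equiv.swap 1 2 = sw 1 from rfl, succ_wp]⟩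
    · exact ⟨succTab 2 n, by rw [show Equiv.swap 2 3 = sw 2 from rfl, succ_wp]⟩
    · exact ⟨succTab 3 n, by rw [show Equiv.swap 5 6 = sw 3 from rfl, succ_wp]⟩

def AZ : M7 :=
  !![1,0,0,0,0,0,0;
     0,1,0,0,0,0,0;
     0,0,-1,0,0,0,1;
     0,0,0,-1,0,0,1;
     0,0,-1,-1,1,0,1;
     0,0,-1,-1,0,1,1;
     0,0,0,0,0,0,1]

lemma Amat_fC : Amat = fC AZ := by
  ext i j
  rw [fC_apply]
  fin_cases i <;> fin_cases j <;> norm_num [Amat, AZ]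

lemma AZ_toM : AZ = toM AN := by decide +kernel

lemma Amat_FN : Amat = FN AN := by rw [Amat_fC, AZ_toM, FN]

lemma certP (t : Fin 4) (k : Fin 40) :
    pm (sw t) * FN (rho k) = FN (rho (ckP t k)) * pm (wp (W48 (cnP t k))) := by
  rw [pm_eq, pm_eq, FN, FN, ← map_mul, ← map_mul]
  congr 1
  rw [← bridge_rowG, ← bridge_col, (d_D1 t k).1]

lemma certA (k : Fin 40) :
    Amat * FN (rho k) = FN (rho (ckA k)) * pm (wp (W48 (cnA k))) := by
  rw [Amat_FN, FN, FN, FN, pm_eq, ← map_mul, ← map_mul]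
  congr 1
  rw [← bridge_col]
  exact toM_mul _ _ _ (d_D2 k)

lemma certR (k : Fin 40) :
    pm (wp (W48 (d4n1 k))) * FN (rrN (blk k)) = FN (rho k) * pm (wp (W48 (d4n2 k))) := by
  rw [pm_eq, pm_eq, FN, FN, ← map_mul, ← map_mul]
  congr 1
  rw [← bridge_rowI, ← bridge_col, d_D4 k]

lemma gl_decomp {m : MC} (hm : m ∈ GL_L) :
    ∃ (k : Fin 40) (s : Equiv.Perm (Fin 7)), s ∈ Hc ∧ m = FN (rho k) * pm s := by
  obtain ⟨l, hl, rfl⟩ := Submonoid.exists_list_of_mem_closure hm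
  clear hm
  induction l with
  | nil =>
    refine ⟨0, 1, Submonoid.one_mem _, ?_⟩
    rw [List.prod_nil, pm_one, FN, d_rho0, d_id, map_one, mul_one]
  | cons g l ih =>
    obtain ⟨k, s, hs, hprod⟩ := ih (fun y hy => hl y (List.mem_cons_of_mem _ hy))
    have hg := hl g (List.mem_cons_self)
    simp only [Set.mem_insert_iff, Set.mem_singleton_iff] at hg
    rw [List.prod_cons, hprod]
    have stepP : ∀ t : Fin 4, ∃ (k' : Fin 40) (s' : Equiv.Perm (Fin 7)), s' ∈ Hc ∧
        pm (sw t) * (FN (rho k) * pm s) = FN (rho k') * pm s' := by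
      intro t
      refine ⟨ckP t k, wp (W48 (cnP t k)) * s, Submonoid.mul_mem _ (wp_mem _) hs, ?_⟩
      rw [← mul_assoc, certP, pm_mul, mul_assoc]
    rcases hg with rfl | rfl | rfl | rfl | rfl
    · exact stepP 0
    · exact stepP 1
    · exact stepP 2
    · exact stepP 3
    · refine ⟨ckA k, wp (W48 (cnA k)) * s, Submonoid.mul_mem _ (wp_mem _) hs, ?_⟩
      rw [← mul_assoc, certA, pm_mul, mul_assoc]

lemma sigma_step : ∀ (s₁ : Equiv.Perm (Fin 7)), s₁ ∈ Hc → ∀ k : Fin 40,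
    ∃ (k' : Fin 40) (s' : Equiv.Perm (Fin 7)), s' ∈ Hc ∧ blk k' = blk k ∧
      pm s₁ * FN (rho k) = FN (rho k') * pm s' := by
  intro s₁ hs₁
  obtain ⟨l, hl, rfl⟩ := Submonoid.exists_list_of_mem_closure hs₁
  clear hs₁
  induction l with
  | nil =>
    intro k
    exact ⟨k, 1, Submonoid.one_mem _, rfl, by rw [List.prod_nil, pm_one, one_mul, mul_one]⟩
  | cons g l ih =>
    intro k
    obtain ⟨k₁, s', hs', hblk, heq⟩ := ih (fun y hy => hl y (List.mem_cons_of_mem _ hy)) k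
    have hg := hl g (List.mem_cons_self)
    simp only [Set.mem_insert_iff, Set.mem_singleton_iff] at hg
    have stepP : ∀ t : Fin 4, sw t = g → ∃ (k' : Fin 40) (s'' : Equiv.Perm (Fin 7)), s'' ∈ Hc ∧
        blk k' = blk k ∧ pm ((g :: l).prod) * FN (rho k) = FN (rho k') * pm s'' := by
      intro t ht
      refine ⟨ckP t k₁, wp (W48 (cnP t k₁)) * s', Submonoid.mul_mem _ (wp_mem _) hs',
        by rw [(d_D1 t k₁).2, hblk], ?_⟩
      rw [List.prod_cons, pm_mul, mul_assoc, heq, ← mul_assoc, ← ht, certP, pm_mul, mul_assoc]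
    rcases hg with rfl | rfl | rfl | rfl
    · exact stepP 0 rfl
    · exact stepP 1 rfl
    · exact stepP 2 rfl
    · exact stepP 3 rfl


lemma rrN0 : rrN 0 = idN := by decide +kernel
lemma rrN1 : rrN 1 = AN := by decide +kernel
lemma rZ2 : (pmZ c123 * pmZ (Equiv.swap 5 6) * AZ)^2 = toM (rrN 2) := by decide +kernel
lemma rZ3 : (pmZ c123 * pmZ (Equiv.swap 5 6) * AZ)^3 = toM (rrN 3) := by decide +kernel
lemma rZ4 : (pmZ c123 * AZ)^3 = toM (rrN 4) := by decide +kernel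
lemma rZ5 : (pmZ c123 * pmZ (Equiv.swap 5 6) * AZ)^4 = toM (rrN 5) := by decide +kernel

lemma reps_eq : ∀ i : Fin 6, reps i = FN (rrN i) := by
  intro i
  fin_cases i
  · show (1 : MC) = FN (rrN 0)
    rw [rrN0, FN, d_id, map_one]
  · show Amat = FN (rrN 1)
    rw [rrN1, Amat_FN]
  · show (pm c123 * pm (Equiv.swap 5 6) * Amat)^2 = FN (rrN 2)
    rw [pm_eq, pm_eq, Amat_fC, ← map_mul, ← map_mul, ← map_pow, FN, rZ2]
  · show (pm c123 * pm (Equiv.swap 5 6) * Amat)^3 = FN (rrN 3)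
    rw [pm_eq, pm_eq, Amat_fC, ← map_mul, ← map_mul, ← map_pow, FN, rZ3]
  · show (pm c123 * Amat)^3 = FN (rrN 4)
    rw [pm_eq, Amat_fC, ← map_mul, ← map_pow, FN, rZ4]
  · show (pm c123 * pm (Equiv.swap 5 6) * Amat)^4 = FN (rrN 5)
    rw [pm_eq, pm_eq, Amat_fC, ← map_mul, ← map_mul, ← map_pow, FN, rZ5]

lemma SigmaL_le_GL : SigmaL ≤ GL_L := by
  apply Submonoid.closure_mono
  intro x hx
  simp only [Set.mem_insert_iff, Set.mem_singleton_iff] at hx ⊢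
  tauto

lemma reps_mem_GL : ∀ i : Fin 6, reps i ∈ GL_L := by
  have h1 : pm (Equiv.swap 0 1) ∈ GL_L := Submonoid.subset_closure (by simp)
  have h2 : pm (Equiv.swap 1 2) ∈ GL_L := Submonoid.subset_closure (by simp)
  have h4 : pm (Equiv.swap 5 6) ∈ GL_L := Submonoid.subset_closure (by simp)
  have hA : Amat ∈ GL_L := Submonoid.subset_closure (by simp)
  have hc : pm c123 ∈ GL_L := by
    rw [show c123 = Equiv.swap 0 1 * Equiv.swap 1 2 from rfl, pm_mul]
    exact mul_mem h1 h2
  intro i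
  fin_cases i
  · exact one_mem _
  · exact hA
  · exact pow_mem (mul_mem (mul_mem hc h4) hA) 2
  · exact pow_mem (mul_mem (mul_mem hc h4) hA) 3
  · exact pow_mem (mul_mem hc hA) 3
  · exact pow_mem (mul_mem (mul_mem hc h4) hA) 4

lemma FN_inv (k : Fin 40) : FN (rhoInvN k) * FN (rho k) = 1 := by
  rw [FN, FN, ← map_mul, toM_mul _ _ _ (d_inv k), d_id, map_one]

lemma reps_decomp (i : Fin 6) : reps i = FN (rho (rrK i)) * pm (wp (W48 (rrE i))) := by
  rw [reps_eq, FN, (d_rr i).1, bridge_col, map_mul, ← FN, ← pm_eq]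

/-- explicit description of the double cosets -/
def Dset (i : Fin 6) : Set MC :=
  {x | ∃ (k : Fin 40) (n : Fin 48), blk k = i ∧ x = FN (rho k) * pm (wp (W48 n))}

lemma dCoset_eq (i : Fin 6) : dCoset (reps i) = Dset i := by
  ext m
  constructor
  · rintro ⟨σ, hσ, τ, hτ, rfl⟩
    obtain ⟨s1, hs1, rfl⟩ := (mem_SigmaL σ).1 hσ
    obtain ⟨s2, hs2, rfl⟩ := (mem_SigmaL τ).1 hτ
    obtain ⟨k', s', hs', hblk, heq⟩ := sigma_step s1 hs1 (rrK i)
    obtain ⟨n, hn⟩ := cov48 (Submonoid.mul_mem _ hs'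
      (Submonoid.mul_mem _ (wp_mem (W48 (rrE i))) hs2))
    refine ⟨k', n, by rw [hblk, (d_rr i).2], ?_⟩
    have key : pm s1 * reps i * pm s2 = FN (rho k') * pm (s' * (wp (W48 (rrE i)) * s2)) := by
      rw [reps_decomp]
      simp only [pm_mul, ← mul_assoc]
      rw [show pm s1 * FN (rho (rrK i)) = FN (rho k') * pm s' from heq]
    rw [key, ← hn]
  · rintro ⟨k, n, hk, rfl⟩
    refine ⟨pm (wp (W48 (d4n1 k))), pm_mem_SigmaL (wp_mem _),
      pm ((wp (W48 (d4n2 k)))⁻¹ * wp (W48 n)),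
      pm_mem_SigmaL (Submonoid.mul_mem _ (wp_inv_mem _) (wp_mem _)), ?_⟩
    have h1 := certR k
    rw [hk, ← reps_eq] at h1
    have h2 : pm (wp (W48 (d4n2 k))) * pm ((wp (W48 (d4n2 k)))⁻¹ * wp (W48 n))
        = pm (wp (W48 n)) := by
      rw [← pm_mul, mul_inv_cancel_left]
    rw [h1, mul_assoc, h2]

lemma Dset_param_inj {k k' : Fin 40} {n n' : Fin 48}
    (h : FN (rho k) * pm (wp (W48 n)) = FN (rho k') * pm (wp (W48 n'))) : k = k' ∧ n = n' := by
  have hZ : toM (rho k) * pmZ (wp (W48 n)) = toM (rho k') * pmZ (wp (W48 n')) := by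
    apply fC_inj
    rw [map_mul, map_mul, ← FN, ← FN, ← pm_eq, ← pm_eq]
    exact h
  have hk : k = k' := by
    apply d_phisep
    rw [← d_phi, ← d_phi, ← phiM_invariant (toM (rho k)) (Hc_le_HP (wp_mem (W48 n))), hZ,
      phiM_invariant _ (Hc_le_HP (wp_mem (W48 n')))]
  subst hk
  refine ⟨rfl, ?_⟩
  have h2 : pm (wp (W48 n)) = pm (wp (W48 n')) := by
    have h3 := congrArg (fun x => FN (rhoInvN k) * x) h
    simp only [← mul_assoc, FN_inv k, one_mul] at h3
    exact h3
  have h3 : wp (W48 n) = wp (W48 n') := pm_inj h2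
  apply d_sep48
  intro j
  rw [d_linkT, d_linkT, h3]

lemma Dset_eq_image (i : Fin 6) :
    Dset i = (fun p : Fin 40 × Fin 48 => FN (rho p.1) * pm (wp (W48 p.2))) ''
      ↑((Finset.univ.filter (fun k => blk k = i)) ×ˢ (Finset.univ : Finset (Fin 48))) := by
  ext x
  constructor
  · rintro ⟨k, n, hk, rfl⟩
    exact ⟨(k, n), by simp [hk], rfl⟩
  · rintro ⟨⟨k, n⟩, hm, rfl⟩
    simp only [Finset.coe_product, Set.mem_prod, Finset.mem_coe, Finset.mem_filter] at hm
    exact ⟨k, n, hm.1.2, rfl⟩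

lemma d_cards : ∀ i : Fin 6, (Finset.univ.filter (fun k => blk k = i)).card
    = ![1,12,12,12,2,1] i := by decide +kernel

lemma card_Dset (i : Fin 6) : Nat.card (Dset i) = ![1,12,12,12,2,1] i * 48 := by
  rw [Dset_eq_image, Nat.card_coe_set_eq, Set.ncard_image_of_injOn, Set.ncard_coe_finset,
    Finset.card_product, Finset.card_univ, d_cards]
  · rfl
  · intro p _ q _ hpq
    obtain ⟨h1, h2⟩ := Dset_param_inj hpq
    exact Prod.ext h1 h2


lemma part1 : {m : MC | m ∈ GL_L ∧ ∃ σ : Equiv.Perm (Fin 7), m = pm σ}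
    = (SigmaL : Set MC) := by
  ext m
  constructor
  · rintro ⟨hm, σ, rfl⟩
    obtain ⟨k, s, hs, heq⟩ := gl_decomp hm
    have hk : k = 0 := by
      rcases d_entries k with h0 | ⟨p, hp⟩
      · exact h0
      exfalso
      have hz : toM (rho k) = pmZ (σ * s⁻¹) := by
        apply fC_inj
        rw [← FN, ← pm_eq, pm_mul, heq, mul_assoc, ← pm_mul, mul_inv_cancel, pm_one, mul_one]
      have hi : p.val / 7 < 7 := by have := p.isLt; omega
      have hj : p.val % 7 < 7 := by omega
      have he : toM (rho k) ⟨p.val/7, hi⟩ ⟨p.val%7, hj⟩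
          = pmZ (σ * s⁻¹) ⟨p.val/7, hi⟩ ⟨p.val%7, hj⟩ := by rw [hz]
      rw [toM_apply] at he
      simp only [pmZ, Matrix.of_apply] at he
      have hpv : 7 * ((⟨p.val/7, hi⟩ : Fin 7) : ℕ) + ((⟨p.val%7, hj⟩ : Fin 7) : ℕ) = p.val := by
        show 7 * (p.val/7) + p.val%7 = p.val
        omega
      rw [hpv] at he
      split at he <;> omega
    subst hk
    rw [heq, FN, d_rho0, d_id, map_one, one_mul]
    exact pm_mem_SigmaL hs
  · intro hm
    refine ⟨SigmaL_le_GL hm, ?_⟩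
    obtain ⟨s, hs, rfl⟩ := (mem_SigmaL m).1 hm
    exact ⟨s, rfl⟩


end DC


theorem double_coset_decomposition :
    -- Σ consists precisely of the permutation matrices in G_L
    {m | m ∈ GL_L ∧ ∃ σ : Equiv.Perm (Fin 7), m = pm σ} = (SigmaL : Set (Matrix (Fin 7) (Fin 7) ℂ)) ∧
    -- the six double cosets are pairwise disjoint and exhaust G_L
    (∀ i j : Fin 6, i ≠ j → Disjoint (dCoset (reps i)) (dCoset (reps j))) ∧
    (⋃ i : Fin 6, dCoset (reps i)) = (GL_L : Set (Matrix (Fin 7) (Fin 7) ℂ)) ∧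
    -- with the stated cardinalities
    (∀ i : Fin 6, Nat.card (dCoset (reps i)) = dcSizes i) := by
  refine ⟨DC.part1, ?_, ?_, ?_⟩
  · intro i j hij
    rw [Set.disjoint_left]
    intro m hmi hmj
    rw [DC.dCoset_eq] at hmi hmj
    obtain ⟨k, n, hk, rfl⟩ := hmi
    obtain ⟨k', n', hk', heq⟩ := hmj
    obtain ⟨hkk, -⟩ := DC.Dset_param_inj heq
    exact hij (by rw [← hk, hkk, hk'])
  · ext m
    constructor
    · intro hm
      obtain ⟨_, ⟨i, rfl⟩, hmi⟩ := hm
      obtain ⟨σ, hσ, τ, hτ, rfl⟩ := hmi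
      exact mul_mem (mul_mem (DC.SigmaL_le_GL hσ) (DC.reps_mem_GL i)) (DC.SigmaL_le_GL hτ)
    · intro hm
      obtain ⟨k, s, hs, rfl⟩ := DC.gl_decomp hm
      obtain ⟨n, hn⟩ := DC.cov48 hs
      refine Set.mem_iUnion.2 ⟨DC.blk k, ?_⟩
      rw [DC.dCoset_eq]
      exact ⟨k, n, rfl, by rw [hn]⟩
  · intro i
    rw [DC.dCoset_eq, DC.card_Dset]
    fin_cases i <;> rfl
end

section
/- Let n be a nonnegative integer and let b,c,d,e,f,g ∈ ℂ with e+f+g-b-c-d+n = 1, and assume none of e, f, g, 1-n+b-f, 1-n+b-e is a nonpositive integer. Then the terminating Saalschützian series satisfy Bailey's identity: Σ_{k=0}^{n} [(-n)_k (b)_k (c)_k (d)_k] / [k! (e)_k (f)_k (g)_k] = [(e-b)_n (f-b)_n / ((e)_n (f)_n)] · Σ_{k=0}^{n} [(-n)_k (b)_k (g-c)_k (g-d)_k] / [k! (1-n+b-f)_k (1-n+b-e)_k (g)_k], where (x)_k denotes the rising factorial x(x+1)···(x+k-1). -/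
/-- The rising factorial `(x)_k = x(x+1)⋯(x+k-1)`. -/
noncomputable def rf (x : ℂ) (k : ℕ) : ℂ := ∏ i ∈ Finset.range k, (x + i)

/-- `z` is not a nonpositive integer. -/
def notNonposInt (z : ℂ) : Prop := ∀ m : ℕ, z ≠ -(m : ℂ)

lemma rf_zero (x : ℂ) : rf x 0 = 1 := by simp [rf]

lemma rf_succ (x : ℂ) (k : ℕ) : rf x (k+1) = rf x k * (x + k) := by
  simp [rf, Finset.prod_range_succ]

lemma rf_one (x : ℂ) : rf x 1 = x := by simp [rf]

lemma rf_add (x : ℂ) (m k : ℕ) : rf x (m+k) = rf x m * rf (x+m) k := by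
  simp only [rf, Finset.prod_range_add]
  congr 1
  refine Finset.prod_congr rfl fun i _ => ?_
  push_cast; ring

lemma rf_reflect (x : ℂ) (M : ℕ) : rf (1 - x - M) M = (-1)^M * rf x M := by
  have h : ∀ j ∈ Finset.range M, (1 - x - (M:ℂ) + j) = -(x + (M - 1 - j : ℕ)) := by
    intro j hj
    have hj' : j < M := Finset.mem_range.mp hj
    have : ((M - 1 - j : ℕ) : ℂ) = (M : ℂ) - 1 - j := by
      have h1 : j ≤ M - 1 := Nat.le_sub_one_of_lt hj'
      have h2 : 1 ≤ M := by omega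
      push_cast [Nat.cast_sub h1, Nat.cast_sub h2]
      ring
    rw [this]; ring
  rw [rf, Finset.prod_congr rfl h]
  rw [show (∏ j ∈ Finset.range M, -(x + ((M - 1 - j : ℕ) : ℂ))) =
      (-1)^M * ∏ j ∈ Finset.range M, (x + ((M - 1 - j : ℕ) : ℂ)) by
    rw [show (∏ j ∈ Finset.range M, -(x + ((M - 1 - j : ℕ) : ℂ)))
        = ∏ j ∈ Finset.range M, ((-1) * (x + ((M - 1 - j : ℕ) : ℂ))) by
      exact Finset.prod_congr rfl fun i _ => by ring]
    rw [Finset.prod_mul_distrib, Finset.prod_const, Finset.card_range]]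
  rw [Finset.prod_range_reflect (fun j => (x + (j:ℂ))) M]
  rfl

lemma rf_ne_zero {x : ℂ} (hx : notNonposInt x) (k : ℕ) : rf x k ≠ 0 := by
  rw [rf]
  exact Finset.prod_ne_zero_iff.mpr fun i _ => by
    intro h; exact hx i (by linear_combination h)

lemma rf_neg_nat (n k : ℕ) (h : k ≤ n) :
    rf (-(n:ℂ)) k = (-1)^k * (k.factorial : ℂ) * (n.choose k : ℂ) := by
  have h1 : rf (-(n:ℂ)) k = ∏ i ∈ Finset.range k, ((-1) * ((n - i : ℕ) : ℂ)) := by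
    refine Finset.prod_congr rfl fun i hi => ?_
    have hi' : i < k := Finset.mem_range.mp hi
    rw [Nat.cast_sub (by omega : i ≤ n)]; ring
  rw [h1, Finset.prod_mul_distrib, Finset.prod_const, Finset.card_range, ← Nat.cast_prod,
    ← Nat.descFactorial_eq_prod_range, Nat.descFactorial_eq_factorial_mul_choose]
  push_cast; ring

noncomputable def psT (a b c : ℂ) (n k : ℕ) : ℂ :=
  (n.choose k : ℂ) * (rf a k * rf b k * (rf (c-a-b) (n-k) * rf (c+k) (n-k)))

lemma psT_zero (a b c : ℂ) (n : ℕ) :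
    psT a b c (n+1) 0 = ((c-a+n)*(c-b+n) - a*b) * psT a b c n 0 := by
  simp only [psT, Nat.choose_zero_right, Nat.cast_one, rf_zero, Nat.sub_zero]
  rw [rf_succ, rf_succ]
  push_cast; ring

lemma psT_step (a b c : ℂ) (n j : ℕ) (hj : j ≤ n) :
    psT a b c (n+1) (j+1)
      = ((c-a+n)*(c-b+n) - (a+((j+1:ℕ):ℂ))*(b+((j+1:ℕ):ℂ))) * psT a b c n (j+1)
        + (a+j)*(b+j) * psT a b c n j := by
  rcases eq_or_lt_of_le hj with rfl | hlt
  · simp only [psT, Nat.choose_self, Nat.choose_succ_self, Nat.cast_zero, Nat.cast_one,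
      Nat.sub_self, rf_zero]
    rw [rf_succ a j, rf_succ b j]
    ring
  · obtain ⟨m, rfl⟩ : ∃ m, n = j + 1 + m := ⟨n - j - 1, by omega⟩
    have hs1 : j + 1 + m + 1 - (j + 1) = m + 1 := by omega
    have hs2 : j + 1 + m - (j + 1) = m := by omega
    have hs3 : j + 1 + m - j = m + 1 := by omega
    simp only [psT, hs1, hs2, hs3]
    have hP : ((j+1+m+1).choose (j+1) : ℂ)
        = ((j+1+m).choose j : ℂ) + ((j+1+m).choose (j+1) : ℂ) := by
      rw [show j+1+m+1 = (j+(m+1))+1 by ring, show j+1+m = j+(m+1) by ring]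
      rw [Nat.choose_succ_succ' (j+(m+1)) j]
      push_cast; ring
    have hrel : ((j+1+m).choose (j+1) : ℂ) * ((j:ℂ)+1)
        = ((j+1+m).choose j : ℂ) * ((m:ℂ)+1) := by
      have h := Nat.choose_succ_right_eq (j+1+m) j
      rw [show j+1+m - j = m+1 by omega] at h
      exact_mod_cast congrArg (Nat.cast : ℕ → ℂ) h
    rw [hP]
    rw [show c + (((j+1:ℕ)):ℂ) = c + (j:ℂ) + 1 by push_cast; ring]
    rw [rf_succ a j, rf_succ b j, rf_succ (c-a-b) m,
      rf_succ (c+(j:ℂ)+1) m,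
      show rf (c+(j:ℕ)) (m+1) = (c+(j:ℂ)) * rf (c+(j:ℂ)+1) m by
        rw [show m + 1 = 1 + m by ring, rf_add, rf_one]; norm_num]
    push_cast
    linear_combination (-(c-a-b+m) * ((a+j)*(b+j) * (rf a j * rf b j *
      (rf (c-a-b) m * rf (c+(j:ℂ)+1) m)))) * hrel

lemma PSstar (n : ℕ) (a b c : ℂ) :
    ∑ k ∈ Finset.range (n+1), psT a b c n k = rf (c-a) n * rf (c-b) n := by
  induction n with
  | zero => simp [psT, rf_zero]
  | succ n ih =>
    set F : ℕ → ℂ := fun k =>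
      ((c-a+(n:ℂ))*(c-b+(n:ℂ)) - (a+(k:ℂ))*(b+(k:ℂ))) * psT a b c n k with hF
    have hstep : ∀ j ∈ Finset.range (n+1), psT a b c (n+1) (j+1)
        = F (j+1) + (a+j)*(b+j) * psT a b c n j := by
      intro j hj
      rw [hF, psT_step a b c n j (Nat.lt_succ_iff.mp (Finset.mem_range.mp hj))]
    have h0 : psT a b c (n+1) 0 = F 0 := by
      rw [hF]; simp only [Nat.cast_zero]
      rw [psT_zero]; ring
    rw [Finset.sum_range_succ', Finset.sum_congr rfl hstep, Finset.sum_add_distrib, h0]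
    have hlast : psT a b c n (n+1) = 0 := by
      simp [psT, Nat.choose_succ_self]
    have e1 : ∑ k ∈ Finset.range (n+2), F k
        = (∑ j ∈ Finset.range (n+1), F (j+1)) + F 0 := Finset.sum_range_succ' F (n+1)
    have e2 : ∑ k ∈ Finset.range (n+2), F k = ∑ k ∈ Finset.range (n+1), F k := by
      rw [Finset.sum_range_succ, hF]
      simp [hlast]
    have e3 : (∑ k ∈ Finset.range (n+1), F k)
          + ∑ k ∈ Finset.range (n+1), (a+k)*(b+k) * psT a b c n k
        = ∑ k ∈ Finset.range (n+1), ((c-a+(n:ℂ))*(c-b+(n:ℂ))) * psT a b c n k := by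
      rw [← Finset.sum_add_distrib]
      exact Finset.sum_congr rfl fun k _ => by rw [hF]; ring
    have e4 : ∑ k ∈ Finset.range (n+1), ((c-a+(n:ℂ))*(c-b+(n:ℂ))) * psT a b c n k
        = ((c-a+(n:ℂ))*(c-b+(n:ℂ))) * (rf (c-a) n * rf (c-b) n) := by
      rw [← Finset.mul_sum, ih]
    have e5 : rf (c-a) (n+1) * rf (c-b) (n+1)
        = ((c-a+(n:ℂ))*(c-b+(n:ℂ))) * (rf (c-a) n * rf (c-b) n) := by
      rw [rf_succ, rf_succ]; ring
    linear_combination -e1 + e2 + e3 + e4 - e5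

lemma PS2 (N : ℕ) (A B C D : ℂ) (h : C + D = 1 + A + B - N) :
    ∑ m ∈ Finset.range (N+1), (-1)^m * (N.choose m : ℂ) * rf A m * rf B m
        * rf (C+m) (N-m) * rf (D+m) (N-m)
      = (-1)^N * (rf (C-A) N * rf (C-B) N) := by
  have hterm : ∀ m ∈ Finset.range (N+1), (-1)^m * (N.choose m : ℂ) * rf A m * rf B m
        * rf (C+m) (N-m) * rf (D+m) (N-m) = (-1)^N * psT A B C N m := by
    intro m hm
    have hm' : m ≤ N := Nat.lt_succ_iff.mp (Finset.mem_range.mp hm)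
    have hD : rf (D+(m:ℂ)) (N-m) = (-1)^(N-m) * rf (C-A-B) (N-m) := by
      have hr := rf_reflect (C-A-B) (N-m)
      rw [show (1:ℂ) - (C-A-B) - ((N-m:ℕ):ℂ) = D + (m:ℂ) by
        rw [Nat.cast_sub hm']; linear_combination -h] at hr
      exact hr
    rw [hD, psT]
    have hsgn : ((-1:ℂ))^m * (-1)^(N-m) = (-1)^N := by
      rw [← pow_add, show m + (N-m) = N by omega]
    calc (-1)^m * (N.choose m : ℂ) * rf A m * rf B m * rf (C+m) (N-m)
          * ((-1)^(N-m) * rf (C-A-B) (N-m))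
        = ((-1:ℂ))^m * (-1)^(N-m) * ((N.choose m : ℂ) * (rf A m * rf B m
            * (rf (C-A-B) (N-m) * rf (C+m) (N-m)))) := by ring
      _ = (-1)^N * psT A B C N m := by rw [hsgn, psT]
  rw [Finset.sum_congr rfl hterm, ← Finset.mul_sum, PSstar]

lemma sum_swap_tri (N : ℕ) (F : ℕ → ℕ → ℂ) :
    ∑ k ∈ Finset.range N, ∑ j ∈ Finset.range (k+1), F k j
      = ∑ j ∈ Finset.range N, ∑ m ∈ Finset.range (N-j), F (j+m) j := by
  induction N with
  | zero => simp
  | succ N ih =>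
    rw [Finset.sum_range_succ, ih]
    have hsplit : ∀ j ∈ Finset.range (N+1), ∑ m ∈ Finset.range (N+1-j), F (j+m) j
        = (∑ m ∈ Finset.range (N-j), F (j+m) j) + F N j := by
      intro j hj
      have hj' : j ≤ N := Nat.lt_succ_iff.mp (Finset.mem_range.mp hj)
      rw [show N+1-j = (N-j)+1 by omega, Finset.sum_range_succ, show j+(N-j) = N by omega]
    have h2 : ∑ j ∈ Finset.range (N+1), ∑ m ∈ Finset.range (N+1-j), F (j+m) j
        = (∑ j ∈ Finset.range (N+1), ∑ m ∈ Finset.range (N-j), F (j+m) j)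
          + ∑ j ∈ Finset.range (N+1), F N j := by
      rw [← Finset.sum_add_distrib]; exact Finset.sum_congr rfl hsplit
    rw [h2]
    congr 1
    rw [Finset.sum_range_succ (fun j => ∑ m ∈ Finset.range (N-j), F (j+m) j) N]
    simp

lemma Bstar (n : ℕ) (b c d e f g : ℂ) (hsaal : e + f + g - b - c - d + (n:ℂ) = 1) :
    ∑ k ∈ Finset.range (n+1), (-1)^k * (n.choose k : ℂ) * rf b k * rf c k * rf d k
        * rf (e+k) (n-k) * rf (f+k) (n-k) * rf (g+k) (n-k)
      = ∑ j ∈ Finset.range (n+1), (-1)^j * (n.choose j : ℂ) * rf b j * rf (g-c) j * rf (g-d) j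
        * rf (e-b) (n-j) * rf (f-b) (n-j) * rf (g+j) (n-j) := by
  have hA : ∀ k : ℕ, rf c k * rf d k = ∑ j ∈ Finset.range (k+1),
      (k.choose j : ℂ) * (rf (g-c) j * rf (g-d) j * (rf (c+d-g) (k-j) * rf (g+(j:ℂ)) (k-j))) := by
    intro k
    have h1 := PSstar k (g-c) (g-d) g
    simp only [psT] at h1
    rw [show g-(g-c)-(g-d) = c+d-g by ring] at h1
    rw [show g-(g-c) = c by ring, show g-(g-d) = d by ring] at h1
    exact h1.symm
  set F : ℕ → ℕ → ℂ := fun k j => (-1)^k * (n.choose k : ℂ) * rf b k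
      * ((k.choose j : ℂ) * (rf (g-c) j * rf (g-d) j * (rf (c+d-g) (k-j) * rf (g+(j:ℂ)) (k-j))))
      * rf (e+k) (n-k) * rf (f+k) (n-k) * rf (g+k) (n-k) with hF
  have hLHS : ∑ k ∈ Finset.range (n+1), (-1)^k * (n.choose k : ℂ) * rf b k * rf c k * rf d k
        * rf (e+k) (n-k) * rf (f+k) (n-k) * rf (g+k) (n-k)
      = ∑ k ∈ Finset.range (n+1), ∑ j ∈ Finset.range (k+1), F k j := by
    refine Finset.sum_congr rfl fun k hk => ?_
    rw [show (-1)^k * (n.choose k : ℂ) * rf b k * rf c k * rf d k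
          * rf (e+k) (n-k) * rf (f+k) (n-k) * rf (g+k) (n-k)
        = ((-1)^k * (n.choose k : ℂ) * rf b k * rf (e+k) (n-k) * rf (f+k) (n-k)
            * rf (g+k) (n-k)) * (rf c k * rf d k) by ring,
      hA k, Finset.mul_sum]
    exact Finset.sum_congr rfl fun j hj => by rw [hF]; ring
  rw [hLHS, sum_swap_tri (n+1) F]
  refine Finset.sum_congr rfl fun j hj => ?_
  have hj' : j ≤ n := Nat.lt_succ_iff.mp (Finset.mem_range.mp hj)
  rw [show n+1-j = (n-j)+1 by omega]
  have hterm : ∀ m ∈ Finset.range ((n-j)+1), F (j+m) j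
      = ((-1)^j * (n.choose j : ℂ) * rf b j * rf (g-c) j * rf (g-d) j * rf (g+(j:ℂ)) (n-j))
        * ((-1)^m * (((n-j).choose m : ℂ)) * rf (b+(j:ℂ)) m * rf (c+d-g) m
          * rf ((e+(j:ℂ))+(m:ℂ)) ((n-j)-m) * rf ((f+(j:ℂ))+(m:ℂ)) ((n-j)-m)) := by
    intro m hm
    have hm' : m ≤ n-j := Nat.lt_succ_iff.mp (Finset.mem_range.mp hm)
    have hjm : j + m ≤ n := by omega
    have hg : rf (g+(j:ℂ)) (n-j) = rf (g+(j:ℂ)) m * rf ((g+(j:ℂ))+(m:ℂ)) ((n-j)-m) := by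
      have h2 := rf_add (g+(j:ℂ)) m ((n-j)-m)
      rw [show m+((n-j)-m) = n-j by omega] at h2
      exact h2
    have hchoose : ((n.choose (j+m) : ℕ) : ℂ) * (((j+m).choose j : ℕ) : ℂ)
        = ((n.choose j : ℕ) : ℂ) * (((n-j).choose m : ℕ) : ℂ) := by
      have h3 := Nat.choose_mul (n := n) (Nat.le_add_right j m)
      rw [show j+m-j = m by omega] at h3
      exact_mod_cast congrArg (Nat.cast : ℕ → ℂ) h3
    rw [hF]
    simp only [show j+m-j = m by omega, show n-(j+m) = (n-j)-m by omega]
    rw [show e+((j+m:ℕ):ℂ) = (e+(j:ℂ))+(m:ℂ) by push_cast; ring,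
      show f+((j+m:ℕ):ℂ) = (f+(j:ℂ))+(m:ℂ) by push_cast; ring,
      show g+((j+m:ℕ):ℂ) = (g+(j:ℂ))+(m:ℂ) by push_cast; ring,
      rf_add b j m, pow_add, hg]
    linear_combination (((-1:ℂ))^j * (-1)^m * rf b j * rf (b+(j:ℂ)) m
      * (rf (g-c) j * rf (g-d) j * (rf (c+d-g) m * (rf (g+(j:ℂ)) m
        * rf ((g+(j:ℂ))+(m:ℂ)) ((n-j)-m))))
      * rf ((e+(j:ℂ))+(m:ℂ)) ((n-j)-m) * rf ((f+(j:ℂ))+(m:ℂ)) ((n-j)-m)) * hchoose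
  have hcond : (e+(j:ℂ)) + (f+(j:ℂ)) = 1 + (b+(j:ℂ)) + (c+d-g) - ((n-j:ℕ):ℂ) := by
    rw [Nat.cast_sub hj']; linear_combination hsaal
  rw [Finset.sum_congr rfl hterm, ← Finset.mul_sum,
    PS2 (n-j) (b+(j:ℂ)) (c+d-g) (e+(j:ℂ)) (f+(j:ℂ)) hcond,
    show (e+(j:ℂ))-(b+(j:ℂ)) = e-b by ring,
    show (e+(j:ℂ))-(c+d-g) = 1-(f-b)-((n-j:ℕ):ℂ) by
      rw [Nat.cast_sub hj']; linear_combination hsaal,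
    rf_reflect (f-b) (n-j)]
  have h1 : ((-1:ℂ))^(n-j) * (-1)^(n-j) = 1 := by rw [← mul_pow]; norm_num
  linear_combination ((-1:ℂ))^j * (n.choose j : ℂ) * rf b j * rf (g-c) j * rf (g-d) j
    * rf (g+(j:ℂ)) (n-j) * rf (e-b) (n-j) * rf (f-b) (n-j) * h1


/-- Bailey's identity for terminating Saalschützian `₄F₃(1)` series. -/
theorem bailey_identity (n : ℕ) (b c d e f g : ℂ)
    (hsaal : e + f + g - b - c - d + n = 1)
    (he : notNonposInt e) (hf : notNonposInt f) (hg : notNonposInt g)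
    (hf' : notNonposInt (1 - n + b - f)) (he' : notNonposInt (1 - n + b - e)) :
    (∑ k ∈ Finset.range (n + 1),
        rf (-(n : ℂ)) k * rf b k * rf c k * rf d k /
          ((k.factorial : ℂ) * rf e k * rf f k * rf g k))
      = rf (e - b) n * rf (f - b) n / (rf e n * rf f n) *
        ∑ k ∈ Finset.range (n + 1),
          rf (-(n : ℂ)) k * rf b k * rf (g - c) k * rf (g - d) k /
            ((k.factorial : ℂ) * rf (1 - n + b - f) k * rf (1 - n + b - e) k * rf g k) := by
  have hPne : rf e n * rf f n * rf g n ≠ 0 :=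
    mul_ne_zero (mul_ne_zero (rf_ne_zero he n) (rf_ne_zero hf n)) (rf_ne_zero hg n)
  apply mul_right_cancel₀ hPne
  have hsplit : ∀ (x : ℂ) (k : ℕ), k ≤ n → rf x n = rf x k * rf (x+(k:ℂ)) (n-k) := by
    intro x k hk
    have h2 := rf_add x k (n-k)
    rw [show k+(n-k) = n by omega] at h2
    exact h2
  have hL : (∑ k ∈ Finset.range (n + 1),
        rf (-(n : ℂ)) k * rf b k * rf c k * rf d k /
          ((k.factorial : ℂ) * rf e k * rf f k * rf g k)) * (rf e n * rf f n * rf g n)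
      = ∑ k ∈ Finset.range (n+1), (-1)^k * (n.choose k : ℂ) * rf b k * rf c k * rf d k
        * rf (e+k) (n-k) * rf (f+k) (n-k) * rf (g+k) (n-k) := by
    rw [Finset.sum_mul]
    refine Finset.sum_congr rfl fun k hk => ?_
    have hk' : k ≤ n := Nat.lt_succ_iff.mp (Finset.mem_range.mp hk)
    rw [hsplit e k hk', hsplit f k hk', hsplit g k hk', rf_neg_nat n k hk']
    have h5 : ((k.factorial : ℕ) : ℂ) ≠ 0 := Nat.cast_ne_zero.mpr k.factorial_ne_zero
    field_simp [rf_ne_zero he k, rf_ne_zero hf k, rf_ne_zero hg k]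
  have hR : (rf (e - b) n * rf (f - b) n / (rf e n * rf f n) *
        ∑ k ∈ Finset.range (n + 1),
          rf (-(n : ℂ)) k * rf b k * rf (g - c) k * rf (g - d) k /
            ((k.factorial : ℂ) * rf (1 - n + b - f) k * rf (1 - n + b - e) k * rf g k))
          * (rf e n * rf f n * rf g n)
      = ∑ k ∈ Finset.range (n+1), (-1)^k * (n.choose k : ℂ) * rf b k * rf (g-c) k * rf (g-d) k
        * rf (e-b) (n-k) * rf (f-b) (n-k) * rf (g+k) (n-k) := by
    have hscal : (rf (e - b) n * rf (f - b) n / (rf e n * rf f n) *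
          ∑ k ∈ Finset.range (n + 1),
            rf (-(n : ℂ)) k * rf b k * rf (g - c) k * rf (g - d) k /
              ((k.factorial : ℂ) * rf (1 - n + b - f) k * rf (1 - n + b - e) k * rf g k))
            * (rf e n * rf f n * rf g n)
        = ∑ k ∈ Finset.range (n + 1), (rf (e-b) n * rf (f-b) n * rf g n) *
            (rf (-(n : ℂ)) k * rf b k * rf (g - c) k * rf (g - d) k /
              ((k.factorial : ℂ) * rf (1 - n + b - f) k * rf (1 - n + b - e) k * rf g k)) := by
      rw [← Finset.mul_sum]
      field_simp [rf_ne_zero he n, rf_ne_zero hf n]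
    rw [hscal]
    refine Finset.sum_congr rfl fun k hk => ?_
    have hk' : k ≤ n := Nat.lt_succ_iff.mp (Finset.mem_range.mp hk)
    have h1 : ((-1:ℂ))^k * (-1)^k = 1 := by rw [← mul_pow]; norm_num
    have heb : rf (e-b) n = rf (e-b) (n-k) * rf ((e-b)+((n-k:ℕ):ℂ)) k := by
      have h2 := rf_add (e-b) (n-k) k
      rw [show (n-k)+k = n by omega] at h2
      exact h2
    have hfb : rf (f-b) n = rf (f-b) (n-k) * rf ((f-b)+((n-k:ℕ):ℂ)) k := by
      have h2 := rf_add (f-b) (n-k) k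
      rw [show (n-k)+k = n by omega] at h2
      exact h2
    have hq : rf ((e-b)+((n-k:ℕ):ℂ)) k = (-1)^k * rf (1-(n:ℂ)+b-e) k := by
      have h4 := rf_reflect ((e-b)+((n-k:ℕ):ℂ)) k
      rw [show (1:ℂ) - ((e-b)+((n-k:ℕ):ℂ)) - (k:ℂ) = 1-(n:ℂ)+b-e by
        rw [Nat.cast_sub hk']; ring] at h4
      rw [h4, ← mul_assoc, ← mul_pow]
      norm_num
    have hp : rf ((f-b)+((n-k:ℕ):ℂ)) k = (-1)^k * rf (1-(n:ℂ)+b-f) k := by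
      have h4 := rf_reflect ((f-b)+((n-k:ℕ):ℂ)) k
      rw [show (1:ℂ) - ((f-b)+((n-k:ℕ):ℂ)) - (k:ℂ) = 1-(n:ℂ)+b-f by
        rw [Nat.cast_sub hk']; ring] at h4
      rw [h4, ← mul_assoc, ← mul_pow]
      norm_num
    have hqf : rf (e-b) n * rf (f-b) n
        = rf (e-b) (n-k) * rf (f-b) (n-k) * rf (1-(n:ℂ)+b-e) k * rf (1-(n:ℂ)+b-f) k := by
      rw [heb, hfb, hq, hp]
      linear_combination (rf (e-b) (n-k) * rf (f-b) (n-k) * rf (1-(n:ℂ)+b-e) k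
        * rf (1-(n:ℂ)+b-f) k) * h1
    rw [hqf, hsplit g k hk', rf_neg_nat n k hk']
    have h5 : ((k.factorial : ℕ) : ℂ) ≠ 0 := Nat.cast_ne_zero.mpr k.factorial_ne_zero
    field_simp [rf_ne_zero hf' k, rf_ne_zero he' k, rf_ne_zero hg k]
  rw [hL, hR, Bstar n b c d e f g hsaal]
end

section
/- Let α,β,γ,δ ∈ ℂ with none of α+γ, α+δ, β+γ, β+δ a nonpositive integer, and suppose the real parts of α,β,γ,δ are all positive (so that the integration contour can be taken to be the imaginary axis). Then Barnes' lemma holds: (1/(2πi)) ∫_{-i∞}^{i∞} Γ(α+t)Γ(β+t)Γ(γ-t)Γ(δ-t) dt = Γ(α+γ)Γ(α+δ)Γ(β+γ)Γ(β+δ) / Γ(α+β+γ+δ). -/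
open Complex MeasureTheory

namespace BarnesAux

open Set Filter

lemma gamma_ne_pole {a : ℂ} (ha : 0 < a.re) : ∀ m : ℕ, a ≠ -(m : ℂ) := by
  intro m h
  have h2 := congrArg Complex.re h
  simp only [Complex.neg_re, Complex.natCast_re] at h2
  have : (0:ℝ) ≤ (m:ℝ) := Nat.cast_nonneg m
  linarith

lemma norm_Gamma_le {z : ℂ} (hz : 0 < z.re) : ‖Gamma z‖ ≤ Real.Gamma z.re := by
  rw [Complex.Gamma_eq_integral hz, Real.Gamma_eq_integral hz, Complex.GammaIntegral]
  refine (norm_integral_le_integral_norm _).trans (le_of_eq ?_)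
  refine setIntegral_congr_fun measurableSet_Ioi (fun x hx => ?_)
  simp only [norm_mul, Complex.norm_real, Real.norm_eq_abs, Complex.norm_cpow_eq_rpow_re_of_pos hx,
    Complex.sub_re, Complex.one_re, abs_of_pos (Real.exp_pos _), Real.abs_exp]

lemma norm_Gamma_decay {a : ℂ} (ha : 0 < a.re) {y : ℝ} (hy : 2 * |a.im| + 2 ≤ |y|) :
    ‖Gamma (a + y * I)‖ ≤ 2 * Real.Gamma (a.re + 1) / |y| := by
  have hz : (a + y * I) ≠ 0 := by
    intro h
    have : (a + y * I).re = 0 := by rw [h]; simp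
    simp only [Complex.add_re, Complex.mul_re, Complex.ofReal_re, Complex.I_re, mul_zero,
      Complex.ofReal_im, Complex.I_im, mul_one, zero_sub] at this
    simp at this; linarith
  have him : (a + y * I).im = a.im + y := by simp
  have hnorm : |y| / 2 ≤ ‖a + y * I‖ := by
    have h1 : |(a + y * I).im| ≤ ‖a + y * I‖ := Complex.abs_im_le_norm _
    rw [him] at h1
    have : |y| - |a.im| ≤ |a.im + y| := by
      have := abs_add_le (-a.im) (a.im + y); simp only [neg_add_cancel_left, abs_neg] at this
      linarith
    nlinarith [abs_nonneg a.im, abs_nonneg y]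
  have hG : Gamma (a + y * I) = Gamma (a + y * I + 1) / (a + y * I) := by
    rw [Complex.Gamma_add_one _ hz]; field_simp
  rw [hG, norm_div]
  have hb : ‖Gamma (a + y * I + 1)‖ ≤ Real.Gamma (a.re + 1) := by
    have hre : (a + y * I + 1).re = a.re + 1 := by simp
    have h := norm_Gamma_le (z := a + y * I + 1) (by rw [hre]; linarith)
    rwa [hre] at h
  have hy0 : 0 < |y| := by linarith [abs_nonneg a.im]
  have hn0 : 0 < ‖a + y * I‖ := lt_of_lt_of_le (by positivity) hnorm
  rw [div_le_div_iff₀ hn0 hy0]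
  have hGnn : 0 ≤ Real.Gamma (a.re + 1) := (Real.Gamma_pos_of_pos (by linarith)).le
  calc ‖Gamma (a + y * I + 1)‖ * |y| ≤ Real.Gamma (a.re + 1) * |y| :=
        mul_le_mul_of_nonneg_right hb hy0.le
    _ = 2 * Real.Gamma (a.re + 1) * (|y| / 2) := by ring
    _ ≤ 2 * Real.Gamma (a.re + 1) * ‖a + y * I‖ :=
        mul_le_mul_of_nonneg_left hnorm (by positivity)

lemma integrable_of_decay (F : ℝ → ℂ) (hF : Continuous F) (C R : ℝ)
    (h : ∀ y : ℝ, R ≤ |y| → ‖F y‖ ≤ C / y ^ 2) : Integrable F := by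
  obtain ⟨M, hM⟩ := (isCompact_Icc (a := -(max R 1)) (b := max R 1)).exists_bound_of_continuousOn
    hF.continuousOn
  set R' := max R 1 with hR'
  have hR1 : 1 ≤ R' := le_max_right _ _
  set C' := max (M * (1 + R' ^ 2)) (2 * max C 0) with hC'
  have hbound : ∀ y : ℝ, ‖F y‖ ≤ C' * (1 + y ^ 2)⁻¹ := by
    intro y
    have hpos : (0:ℝ) < 1 + y ^ 2 := by positivity
    rw [← div_eq_mul_inv, le_div_iff₀ hpos]
    rcases le_or_gt (|y|) R' with hcase | hcase
    · have hy1 : 1 + y ^ 2 ≤ 1 + R' ^ 2 := by nlinarith [abs_nonneg y, _root_.sq_abs y]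
      have hMy : ‖F y‖ ≤ M := hM y (abs_le.mp hcase |> fun h => ⟨h.1, h.2⟩)
      calc ‖F y‖ * (1 + y ^ 2) ≤ M * (1 + R' ^ 2) := by
            nlinarith [norm_nonneg (F y), hpos]
        _ ≤ C' := le_max_left _ _
    · have hyR : R ≤ |y| := le_trans (le_max_left _ _) hcase.le
      have h1 : ‖F y‖ ≤ C / y ^ 2 := h y hyR
      have hy2 : (1:ℝ) ≤ y ^ 2 := by nlinarith [_root_.sq_abs y, hR1]
      have hpy : (0:ℝ) < y ^ 2 := by linarith
      have h1' : ‖F y‖ * y ^ 2 ≤ C := by rw [le_div_iff₀ hpy] at h1; exact h1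
      calc ‖F y‖ * (1 + y ^ 2) ≤ ‖F y‖ * (2 * y ^ 2) := by
            nlinarith [norm_nonneg (F y)]
        _ = 2 * (‖F y‖ * y ^ 2) := by ring
        _ ≤ 2 * max C 0 := by
            have : ‖F y‖ * y ^ 2 ≤ max C 0 := le_trans h1' (le_max_left _ _)
            linarith
        _ ≤ C' := le_max_right _ _
  exact (integrable_inv_one_add_sq.const_mul C').mono' hF.aestronglyMeasurable
    (Filter.Eventually.of_forall hbound)

lemma continuous_Gamma_line (a : ℂ) (ha : 0 < a.re) (c : ℝ) :
    Continuous fun y : ℝ => Gamma (a + (c * y) * I) := by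
  rw [continuous_iff_continuousAt]
  intro y
  refine ContinuousAt.comp ?_ (by fun_prop)
  refine (Complex.differentiableAt_Gamma _ fun m => ?_).continuousAt
  intro h
  have h2 := congrArg Complex.re h
  simp only [Complex.add_re, Complex.mul_re, Complex.ofReal_re, Complex.I_re, mul_zero,
    Complex.ofReal_im, Complex.I_im, mul_one, zero_sub, Complex.neg_re, Complex.natCast_re] at h2
  have : (0:ℝ) ≤ (m:ℝ) := Nat.cast_nonneg m
  simp at h2
  linarith

lemma continuous_gamma2 (a b : ℂ) (ha : 0 < a.re) (hb : 0 < b.re) :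
    Continuous fun y : ℝ => Gamma (a + y * I) * Gamma (b - y * I) := by
  have h1 := continuous_Gamma_line a ha 1
  have h2 := continuous_Gamma_line b hb (-1)
  refine (h1.congr fun y => ?_).mul (h2.congr fun y => ?_)
  · norm_num
  · push_cast; ring_nf

lemma integrable_gamma2 (a b : ℂ) (ha : 0 < a.re) (hb : 0 < b.re) :
    Integrable fun y : ℝ => Gamma (a + y * I) * Gamma (b - y * I) := by
  refine integrable_of_decay _ (continuous_gamma2 a b ha hb)
    ((2 * Real.Gamma (a.re + 1)) * (2 * Real.Gamma (b.re + 1)))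
    (max (2 * |a.im| + 2) (2 * |b.im| + 2)) (fun y hy => ?_)
  have hya : 2 * |a.im| + 2 ≤ |y| := le_trans (le_max_left _ _) hy
  have hyb : 2 * |b.im| + 2 ≤ |y| := le_trans (le_max_right _ _) hy
  have hy0 : 0 < |y| := by linarith [abs_nonneg a.im]
  have e1 : ‖Gamma (a + y * I)‖ ≤ 2 * Real.Gamma (a.re + 1) / |y| := norm_Gamma_decay ha hya
  have e2 : ‖Gamma (b - y * I)‖ ≤ 2 * Real.Gamma (b.re + 1) / |y| := by
    have he : b - (y:ℂ) * I = b + ((-y : ℝ) : ℂ) * I := by push_cast; ring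
    rw [he]
    have := norm_Gamma_decay hb (y := -y) (by rwa [abs_neg])
    rwa [abs_neg] at this
  rw [norm_mul]
  have hg1 : (0:ℝ) ≤ 2 * Real.Gamma (a.re + 1) / |y| := by positivity
  calc ‖Gamma (a + y * I)‖ * ‖Gamma (b - y * I)‖
      ≤ (2 * Real.Gamma (a.re + 1) / |y|) * (2 * Real.Gamma (b.re + 1) / |y|) :=
        mul_le_mul e1 e2 (norm_nonneg _) hg1
    _ = 2 * Real.Gamma (a.re + 1) * (2 * Real.Gamma (b.re + 1)) / y ^ 2 := by
        rw [div_mul_div_comm, ← _root_.sq_abs y]; ring_nf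

section subst

variable {u v : ℂ}

lemma phi_deriv : ∀ t ∈ Ioo (0:ℝ) 1, HasDerivWithinAt (fun t : ℝ => t / (1 - t))
    (((1 - t) ^ 2)⁻¹) (Ioo (0:ℝ) 1) t := by
  intro t ht
  have hne : (1:ℝ) - t ≠ 0 := by obtain ⟨h1', h2'⟩ := ht; intro h; linarith
  have h : HasDerivAt (fun t : ℝ => t / (1 - t)) ((1 * (1 - t) - t * (0 - 1)) / (1 - t) ^ 2) t :=
    HasDerivAt.div (hasDerivAt_id t) ((hasDerivAt_const t (1:ℝ)).sub (hasDerivAt_id t)) hne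
  rw [show ((1 - t) ^ 2)⁻¹ = (1 * (1 - t) - t * (0 - 1)) / (1 - t) ^ 2 by
    rw [inv_eq_one_div]; congr 1; ring]
  exact h.hasDerivWithinAt

lemma phi_image : (fun t : ℝ => t / (1 - t)) '' Ioo 0 1 = Ioi 0 := by
  ext x
  simp only [mem_image, mem_Ioo, mem_Ioi]
  constructor
  · rintro ⟨t, ⟨ht0, ht1⟩, rfl⟩
    have h1 : (0:ℝ) < 1 - t := by linarith
    positivity
  · intro hx
    refine ⟨x / (1 + x), ⟨by positivity, ?_⟩, ?_⟩
    · rw [div_lt_one (by linarith)]; linarith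
    · have h1 : (1:ℝ) + x ≠ 0 := by linarith
      field_simp
      ring

lemma phi_inj : InjOn (fun t : ℝ => t / (1 - t)) (Ioo 0 1) := by
  rintro t1 ⟨h1, h2⟩ t2 ⟨h3, h4⟩ h
  have hn1 : (1:ℝ) - t1 ≠ 0 := by intro h'; linarith
  have hn2 : (1:ℝ) - t2 ≠ 0 := by intro h'; linarith
  field_simp at h
  linarith

lemma pointwise_eq (u v : ℂ) {t : ℝ} (ht : t ∈ Ioo (0:ℝ) 1) :
    |((1 - t) ^ 2)⁻¹| • ((↑(t / (1 - t)) : ℂ) ^ (u - 1) *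
      (1 + (↑(t / (1 - t)) : ℂ)) ^ (-(u + v)))
      = (t : ℂ) ^ (u - 1) * ((1 : ℂ) - t) ^ (v - 1) := by
  obtain ⟨ht0, ht1⟩ := ht
  set r : ℝ := 1 - t with hr
  have hr0 : (0:ℝ) < r := by rw [hr]; linarith
  have hrc0 : (r:ℂ) ≠ 0 := by exact_mod_cast hr0.ne'
  have harg : (r:ℂ).arg ≠ Real.pi := by
    rw [Complex.arg_ofReal_of_nonneg hr0.le]; exact Real.pi_ne_zero.symm
  have h1 : (↑(t / r) : ℂ) ^ (u - 1) = (t:ℂ) ^ (u - 1) * ((r:ℂ) ^ (u - 1))⁻¹ := by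
    rw [show ((t / r : ℝ) : ℂ) = (t:ℂ) * ((r⁻¹:ℝ):ℂ) by push_cast; ring,
      Complex.mul_cpow_ofReal_nonneg ht0.le (by positivity),
      Complex.ofReal_inv, Complex.inv_cpow _ _ harg]
  have h2 : (1:ℂ) + (↑(t / r) : ℂ) = ((r⁻¹ : ℝ) : ℂ) := by
    have hh : (1:ℝ) + t / r = r⁻¹ := by field_simp [hr]; linarith
    rw [show (1:ℂ) + (↑(t / r) : ℂ) = ((1 + t / r : ℝ) : ℂ) by push_cast; ring, hh]
  have h3 : (((r⁻¹:ℝ)):ℂ) ^ (-(u+v)) = (r:ℂ) ^ (u + v) := by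
    rw [Complex.ofReal_inv, Complex.inv_cpow _ _ harg, Complex.cpow_neg, inv_inv]
  have habs : |((r:ℝ) ^ 2)⁻¹| = (r ^ 2)⁻¹ := abs_of_pos (by positivity)
  have e2 : (((r^2)⁻¹ : ℝ) : ℂ) = (r:ℂ) ^ (-(2:ℂ)) := by
    rw [show (2:ℂ) = ((2:ℕ):ℂ) by norm_num, Complex.cpow_neg, Complex.cpow_natCast]
    push_cast; ring
  have e3 : ((r:ℂ) ^ (u-1))⁻¹ = (r:ℂ) ^ (-(u-1)) := (Complex.cpow_neg _ _).symm
  have hrr : ((1:ℂ) - (t:ℂ)) = (r:ℂ) := by rw [hr]; push_cast; ring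
  have e : ((r:ℂ)) ^ (v-1) = (r:ℂ) ^ (-(2:ℂ)) * ((r:ℂ) ^ (-(u-1)) * (r:ℂ) ^ (u+v)) := by
    rw [← Complex.cpow_add _ _ hrc0, ← Complex.cpow_add _ _ hrc0]
    ring_nf
  rw [h1, h2, h3, habs, real_smul, e2, e3, hrr, e]
  ring

lemma beta_subst (hu : 0 < u.re) (hv : 0 < v.re) :
    IntegrableOn (fun x : ℝ => (x:ℂ) ^ (u-1) * (1 + (x:ℂ)) ^ (-(u+v))) (Ioi 0) ∧
    ∫ x in Ioi (0:ℝ), (x:ℂ) ^ (u-1) * (1 + (x:ℂ)) ^ (-(u+v))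
      = Gamma u * Gamma v / Gamma (u+v) := by
  have himg := phi_image
  have hbeta : IntegrableOn (fun t : ℝ => (t:ℂ) ^ (u-1) * ((1:ℂ) - t) ^ (v-1)) (Ioo 0 1) := by
    have h := Complex.betaIntegral_convergent hu hv
    rw [intervalIntegrable_iff_integrableOn_Ioc_of_le zero_le_one] at h
    exact h.mono_set Ioo_subset_Ioc_self
  constructor
  · rw [← himg, integrableOn_image_iff_integrableOn_abs_deriv_smul measurableSet_Ioo
      phi_deriv phi_inj]
    exact (integrableOn_congr_fun (fun t ht => pointwise_eq u v ht) measurableSet_Ioo).mpr hbeta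
  · rw [← himg, integral_image_eq_integral_abs_deriv_smul measurableSet_Ioo phi_deriv phi_inj]
    rw [setIntegral_congr_fun measurableSet_Ioo (fun t ht => pointwise_eq u v ht)]
    have hb : ∫ t in Ioo (0:ℝ) 1, (t:ℂ) ^ (u-1) * ((1:ℂ) - t) ^ (v-1)
        = Complex.betaIntegral u v := by
      rw [Complex.betaIntegral, intervalIntegral.integral_of_le zero_le_one,
        ← MeasureTheory.integral_Ioc_eq_integral_Ioo]
    rw [hb]
    have hG := Complex.Gamma_mul_Gamma_eq_betaIntegral hu hv
    have hne : Gamma (u + v) ≠ 0 :=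
      Complex.Gamma_ne_zero (gamma_ne_pole (by simp only [Complex.add_re]; linarith))
    field_simp [hG]
    rw [hG]; ring

lemma beta_int (u v p : ℂ) (hu : 0 < u.re) (hv : 0 < v.re) (hp : p = -(u+v)) :
    IntegrableOn (fun x : ℝ => (x:ℂ) ^ (u-1) * (1 + (x:ℂ)) ^ p) (Ioi 0) := by
  subst hp; exact (beta_subst hu hv).1

lemma beta_val (u v p : ℂ) (hu : 0 < u.re) (hv : 0 < v.re) (hp : p = -(u+v)) :
    ∫ x in Ioi (0:ℝ), (x:ℂ) ^ (u-1) * (1 + (x:ℂ)) ^ p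
      = Gamma u * Gamma v / Gamma (u+v) := by
  subst hp; exact (beta_subst hu hv).2

end subst

end BarnesAux

open BarnesAux Set Filter

/-- Barnes' lemma: `(1/(2πi)) ∫_{-i∞}^{i∞} Γ(α+t)Γ(β+t)Γ(γ-t)Γ(δ-t) dt
= Γ(α+γ)Γ(α+δ)Γ(β+γ)Γ(β+δ)/Γ(α+β+γ+δ)`, the contour being the imaginary
axis (parameterized as `t = iy`, `y ∈ ℝ`). -/
theorem barnes_lemma (α β γ δ : ℂ)
    (hα : 0 < α.re) (hβ : 0 < β.re) (hγ : 0 < γ.re) (hδ : 0 < δ.re)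
    (h1 : notNonposInt (α + γ)) (h2 : notNonposInt (α + δ))
    (h3 : notNonposInt (β + γ)) (h4 : notNonposInt (β + δ)) :
    (1 / (2 * ↑Real.pi * Complex.I)) *
        ∫ y : ℝ, Complex.I *
          (Gamma (α + Complex.I * y) * Gamma (β + Complex.I * y) *
            Gamma (γ - Complex.I * y) * Gamma (δ - Complex.I * y))
      = Gamma (α + γ) * Gamma (α + δ) * Gamma (β + γ) * Gamma (β + δ) /
          Gamma (α + β + γ + δ) := by
  have hπ : (Real.pi : ℝ) ≠ 0 := Real.pi_ne_zero
  have hβδ : Gamma (β + δ) ≠ 0 :=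
    Complex.Gamma_ne_zero (gamma_ne_pole (by simp only [Complex.add_re]; linarith))
  have hαγ : Gamma (α + γ) ≠ 0 :=
    Complex.Gamma_ne_zero (gamma_ne_pole (by simp only [Complex.add_re]; linarith))
  have hsum : Gamma (α + β + γ + δ) ≠ 0 :=
    Complex.Gamma_ne_zero (gamma_ne_pole (by simp only [Complex.add_re]; linarith))
  set g : ℝ → ℂ := fun x => (x:ℂ) ^ (δ - 1) * (1 + (x:ℂ)) ^ (-(β + δ)) with hgdef
  set G : ℝ → ℂ := fun y => Gamma (δ + y * I) * Gamma (β - y * I) / Gamma (β + δ) with hGdef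
  set Φ : ℝ → ℝ → ℂ := fun x y =>
    (x:ℂ) ^ ((α - y * I) - 1) * (1 + (x:ℂ)) ^ (-(α + γ)) * G y with hΦdef
  -- mellin transform of g
  have hmellin : ∀ y : ℝ, mellin g (1 + y * I) = G y := by
    intro y
    have hre1 : 0 < (δ + y * I).re := by
      simpa using hδ
    have hre2 : 0 < (β - y * I).re := by
      simpa using hβ
    rw [mellin, setIntegral_congr_fun measurableSet_Ioi (g := fun x : ℝ =>
        (x:ℂ) ^ ((δ + y * I) - 1) * (1 + (x:ℂ)) ^ (-(β + δ))) ?_]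
    · rw [show -(β+δ) = -((δ + y*I) + (β - y*I)) by ring,
        beta_val (δ + y*I) (β - y*I) _ hre1 hre2 rfl,
        show (δ + y*I) + (β - y*I) = β + δ by ring]
    · intro x hx
      have hx0 : (x:ℂ) ≠ 0 := Complex.ofReal_ne_zero.mpr (ne_of_gt hx)
      simp only [smul_eq_mul, hgdef]
      rw [← mul_assoc, ← Complex.cpow_add _ _ hx0]
      ring_nf
  -- Mellin convergence of g at 1
  have hconv : MellinConvergent g ((1:ℝ):ℂ) := by
    have hint : IntegrableOn g (Ioi 0) := beta_int δ β (-(β+δ)) hδ hβ (by ring)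
    refine (integrableOn_congr_fun (fun t ht => ?_) measurableSet_Ioi).mpr hint
    simp
  -- vertical integrability
  have hGi : Integrable G := (integrable_gamma2 δ β hδ hβ).div_const _
  have hvert : Complex.VerticalIntegrable (mellin g) 1 := by
    have heq : (fun y : ℝ => mellin g (((1:ℝ):ℂ) + y * I)) = G := by
      funext y; rw [Complex.ofReal_one, hmellin y]
    unfold Complex.VerticalIntegrable
    rw [heq]
    exact hGi
  -- Mellin inversion
  have hinv : ∀ x : ℝ, x ∈ Ioi (0:ℝ) →
      g x = (1 / (2 * Real.pi) : ℝ) • ∫ y : ℝ, (x:ℂ) ^ (-(1 + y * I)) * G y := by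
    intro x hx
    have hcont : ContinuousAt g x := by
      have c1 : ContinuousAt (fun t : ℝ => ((t:ℂ)) ^ (δ - 1)) x :=
        (continuousAt_cpow_const (Complex.mem_slitPlane_iff.mpr
          (Or.inl (by simpa using mem_Ioi.mp hx)))).comp (by fun_prop)
      have c2 : ContinuousAt (fun t : ℝ => ((1:ℂ) + (t:ℂ)) ^ (-(β + δ))) x := by
        refine (continuousAt_cpow_const (Complex.mem_slitPlane_iff.mpr (Or.inl ?_))).comp
          (by fun_prop)
        simp only [Complex.add_re, Complex.one_re, Complex.ofReal_re]
        linarith [mem_Ioi.mp hx]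
      exact c1.mul c2
    have h := mellinInv_mellin_eq 1 g hx hconv hvert hcont
    rw [mellinInv] at h
    have heq : (fun y : ℝ => (x:ℂ) ^ (-(((1:ℝ):ℂ) + y * I)) • mellin g (((1:ℝ):ℂ) + y * I))
        = fun y : ℝ => (x:ℂ) ^ (-(1 + y * I)) * G y := by
      funext y; rw [Complex.ofReal_one, hmellin y, smul_eq_mul]
    rw [heq] at h
    exact h.symm
  -- the Beta evaluation of ∫ f·g
  have e1 : ∫ x in Ioi (0:ℝ), (x:ℂ) ^ ((α+δ) - 1) * (1 + (x:ℂ)) ^ (-(α+β+γ+δ))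
      = Gamma (α+δ) * Gamma (β+γ) / Gamma (α+β+γ+δ) := by
    rw [show -(α+β+γ+δ) = -((α+δ) + (β+γ)) by ring,
      beta_val (α+δ) (β+γ) _ (by simp only [Complex.add_re]; linarith)
        (by simp only [Complex.add_re]; linarith) rfl,
      show (α+δ) + (β+γ) = α+β+γ+δ by ring]
  -- split and insert inversion formula
  have e2 : ∫ x in Ioi (0:ℝ), (x:ℂ) ^ ((α+δ) - 1) * (1 + (x:ℂ)) ^ (-(α+β+γ+δ))
      = ∫ x in Ioi (0:ℝ), (1 / (2 * Real.pi) : ℝ) • ∫ y : ℝ, Φ x y := by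
    refine setIntegral_congr_fun measurableSet_Ioi (fun x hx => ?_)
    have hx0 : (x:ℂ) ≠ 0 := Complex.ofReal_ne_zero.mpr (ne_of_gt hx)
    have h1x : (1:ℂ) + (x:ℂ) ≠ 0 := by
      rw [show (1:ℂ) + (x:ℂ) = ((1+x:ℝ):ℂ) by push_cast; ring]
      exact Complex.ofReal_ne_zero.mpr (by linarith [mem_Ioi.mp hx])
    have hsplit : (x:ℂ) ^ ((α+δ) - 1) * (1 + (x:ℂ)) ^ (-(α+β+γ+δ))
        = (x:ℂ) ^ α * (1 + (x:ℂ)) ^ (-(α+γ)) * g x := by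
      rw [hgdef, show ((α+δ) - 1) = α + (δ-1) by ring, Complex.cpow_add _ _ hx0,
        show (-(α+β+γ+δ)) = (-(α+γ)) + (-(β+δ)) by ring, Complex.cpow_add _ _ h1x]
      ring
    rw [hsplit, hinv x hx, mul_smul_comm, ← integral_const_mul]
    congr 1
    refine integral_congr_ae (Filter.Eventually.of_forall fun y => ?_)
    show (x:ℂ) ^ α * (1 + (x:ℂ)) ^ (-(α+γ)) * ((x:ℂ) ^ (-(1 + y*I)) * G y)
      = (x:ℂ) ^ ((α - y*I) - 1) * (1 + (x:ℂ)) ^ (-(α+γ)) * G y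
    rw [show (α - y*I) - 1 = α + (-(1 + y*I)) by ring, Complex.cpow_add _ _ hx0]
    ring
  -- Fubini
  have hA : IntegrableOn (fun x : ℝ => (x:ℂ) ^ (α - 1) * (1 + (x:ℂ)) ^ (-(α+γ))) (Ioi 0) :=
    beta_int α γ _ hα hγ rfl
  have hGc : Continuous G := (continuous_gamma2 δ β hδ hβ).div_const _
  have hmeasset : MeasurableSet (Ioi (0:ℝ) ×ˢ (univ : Set ℝ)) :=
    measurableSet_Ioi.prod MeasurableSet.univ
  have hmeasure : (volume.restrict (Ioi (0:ℝ))).prod (volume : Measure ℝ)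
      = ((volume : Measure ℝ).prod volume).restrict (Ioi 0 ×ˢ univ) := by
    rw [← Measure.prod_restrict, Measure.restrict_univ]
  have hcontΦ : ContinuousOn (Function.uncurry Φ) (Ioi (0:ℝ) ×ˢ (univ : Set ℝ)) := by
    intro p hp
    obtain ⟨hp1, -⟩ := hp
    apply ContinuousAt.continuousWithinAt
    have c1 : ContinuousAt (fun p : ℝ × ℝ => ((p.1:ℂ)) ^ ((α - p.2 * I) - 1)) p := by
      refine ContinuousAt.cpow (by fun_prop) (by fun_prop) (Or.inl ?_)
      simpa using (mem_Ioi.mp hp1)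
    have c2 : ContinuousAt (fun p : ℝ × ℝ => ((1:ℂ) + (p.1:ℂ)) ^ (-(α+γ))) p := by
      refine ContinuousAt.cpow (by fun_prop) continuousAt_const (Or.inl ?_)
      simp only [Complex.add_re, Complex.one_re, Complex.ofReal_re]
      linarith [mem_Ioi.mp hp1]
    exact (c1.mul c2).mul (hGc.continuousAt.comp (by fun_prop))
  have haesm : AEStronglyMeasurable (Function.uncurry Φ)
      ((volume.restrict (Ioi (0:ℝ))).prod volume) := by
    rw [hmeasure]
    exact hcontΦ.aestronglyMeasurable hmeasset
  have hprod : Integrable (fun p : ℝ × ℝ =>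
      ‖(p.1:ℂ) ^ (α - 1) * (1 + (p.1:ℂ)) ^ (-(α+γ))‖ * ‖G p.2‖)
      ((volume.restrict (Ioi (0:ℝ))).prod volume) :=
    hA.norm.mul_prod hGi.norm
  have hae : ∀ᵐ p ∂((volume.restrict (Ioi (0:ℝ))).prod volume),
      ‖Function.uncurry Φ p‖ ≤ ‖(p.1:ℂ) ^ (α - 1) * (1 + (p.1:ℂ)) ^ (-(α+γ))‖ * ‖G p.2‖ := by
    rw [hmeasure]
    refine (ae_restrict_mem hmeasset).mono (fun p hp => ?_)
    obtain ⟨hp1, -⟩ := hp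
    have hx : (0:ℝ) < p.1 := mem_Ioi.mp hp1
    refine le_of_eq ?_
    rw [hΦdef]
    simp only [Function.uncurry]
    rw [norm_mul, norm_mul, norm_mul]
    congr 2
    rw [Complex.norm_cpow_eq_rpow_re_of_pos hx, Complex.norm_cpow_eq_rpow_re_of_pos hx]
    congr 1
    simp
  have hΦint : Integrable (Function.uncurry Φ) ((volume.restrict (Ioi (0:ℝ))).prod volume) :=
    hprod.mono' haesm hae
  have hswap := MeasureTheory.integral_integral_swap hΦint
  -- inner x-integral
  have hinner : ∀ y : ℝ, (∫ x in Ioi (0:ℝ), Φ x y)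
      = (Gamma (α - y * I) * Gamma (γ + y * I) / Gamma (α + γ)) * G y := by
    intro y
    rw [hΦdef]
    rw [MeasureTheory.integral_mul_const]
    congr 1
    have hre1 : 0 < (α - y * I).re := by simpa using hα
    have hre2 : 0 < (γ + y * I).re := by simpa using hγ
    rw [show -(α+γ) = -((α - y*I) + (γ + y*I)) by ring,
      beta_val (α - y*I) (γ + y*I) _ hre1 hre2 rfl,
      show (α - y*I) + (γ + y*I) = α + γ by ring]
  -- key identity
  have SKey : (1 / (2 * Real.pi) : ℝ) •
        ∫ y : ℝ, (Gamma (α - y * I) * Gamma (γ + y * I) / Gamma (α + γ)) * G y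
      = Gamma (α+δ) * Gamma (β+γ) / Gamma (α+β+γ+δ) := by
    rw [← integral_congr_ae (Filter.Eventually.of_forall hinner), ← hswap,
      ← integral_smul, ← e2, e1]
  -- now unfold G and pass to the statement's integrand
  have SKey2 : (1 / (2 * Real.pi) : ℝ) • ((Gamma (α+γ) * Gamma (β+δ))⁻¹ *
        ∫ y : ℝ, Gamma (α - y * I) * Gamma (β - y * I) * Gamma (γ + y * I) * Gamma (δ + y * I))
      = Gamma (α+δ) * Gamma (β+γ) / Gamma (α+β+γ+δ) := by
    rw [← SKey, ← integral_const_mul]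
    congr 1
    refine integral_congr_ae (Filter.Eventually.of_forall fun y => ?_)
    rw [hGdef]
    ring
  have hPQ : (∫ y : ℝ, Gamma (α - y * I) * Gamma (β - y * I) * Gamma (γ + y * I) *
        Gamma (δ + y * I))
      = ∫ y : ℝ, Gamma (α + Complex.I * y) * Gamma (β + Complex.I * y) *
          Gamma (γ - Complex.I * y) * Gamma (δ - Complex.I * y) := by
    rw [← integral_neg_eq_self (fun y : ℝ => Gamma (α + Complex.I * y) *
      Gamma (β + Complex.I * y) * Gamma (γ - Complex.I * y) * Gamma (δ - Complex.I * y)) volume]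
    refine integral_congr_ae (Filter.Eventually.of_forall fun y => ?_)
    push_cast
    ring_nf
  rw [hPQ] at SKey2
  set T := ∫ y : ℝ, Gamma (α + Complex.I * y) * Gamma (β + Complex.I * y) *
      Gamma (γ - Complex.I * y) * Gamma (δ - Complex.I * y) with hT
  rw [show (∫ y : ℝ, Complex.I * (Gamma (α + Complex.I * y) * Gamma (β + Complex.I * y) *
      Gamma (γ - Complex.I * y) * Gamma (δ - Complex.I * y))) = Complex.I * T from
    integral_const_mul _ _]
  have hsmul : ((1 / (2 * Real.pi) : ℝ) : ℂ) * ((Gamma (α+γ) * Gamma (β+δ))⁻¹ * T)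
      = Gamma (α+δ) * Gamma (β+γ) / Gamma (α+β+γ+δ) := by
    rw [← SKey2, real_smul]
  have hπc : ((Real.pi : ℝ) : ℂ) ≠ 0 := Complex.ofReal_ne_zero.mpr hπ
  have hIne := Complex.I_ne_zero
  have hstep : 1 / (2 * (Real.pi:ℂ) * I) * (I * T) = (2 * (Real.pi:ℂ))⁻¹ * T := by
    field_simp
  rw [hstep]
  have h2 : (2 * (Real.pi:ℂ))⁻¹ * T
      = Gamma (α+γ) * Gamma (β+δ) * (Gamma (α+δ) * Gamma (β+γ) / Gamma (α+β+γ+δ)) := by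
    rw [← hsmul]
    push_cast
    field_simp
  rw [h2]
  ring
end

section
/- Let A ∈ GL(7,ℂ) be the matrix sending (a,b,c,d,e,f,g) to (a,b,g-c,g-d,1+a+b-f,1+a+b-e,g), and let P = (123)(67) be the corresponding 7×7 permutation matrix. Then the matrix [(123)(67)A]⁴ represents the transformation (a,b,c,d,e,f,g) ↦ (1+c-e, 1+d-e, 1+a-e, 1+b-e, 2-e, 1+g-e, 1+f-e) up to a permutation of the first four output coordinates and of the last two output coordinates; in particular, ([(123)(67)A]⁴)² ∈ Σ = ⟨(12),(23),(34),(67)⟩. -/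
/-- `B = [(123)(67)A]⁴`. -/
noncomputable def Bmat : Matrix (Fin 7) (Fin 7) ℂ :=
  (pm c123 * pm (Equiv.swap 5 6) * Amat) ^ 4

/-- The linear functional `s(a,b,c,d,e,f,g) = e+f+g-a-b-c-d`. -/
def sfun (x : Fin 7 → ℂ) : ℂ := x 4 + x 5 + x 6 - x 0 - x 1 - x 2 - x 3

/-- The transformation `(a,b,c,d,e,f,g) ↦ (1+c-e,1+d-e,1+a-e,1+b-e,2-e,1+g-e,1+f-e)`. -/
def Tmap (x : Fin 7 → ℂ) : Fin 7 → ℂ :=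
  ![1 + x 2 - x 4, 1 + x 3 - x 4, 1 + x 0 - x 4, 1 + x 1 - x 4,
    2 - x 4, 1 + x 6 - x 4, 1 + x 5 - x 4]

set_option maxHeartbeats 2000000

open Matrix in
@[simp] lemma my_cons_val_five {α : Type*} {m : ℕ} (x : α) (u : Fin (m+5) → α) :
    vecCons x u 5 = vecHead (vecTail (vecTail (vecTail (vecTail u)))) := rfl

open Matrix in
@[simp] lemma my_cons_val_six {α : Type*} {m : ℕ} (x : α) (u : Fin (m+6) → α) :
    vecCons x u 6 = vecHead (vecTail (vecTail (vecTail (vecTail (vecTail u))))) := rfl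

lemma pm_c123 : pm c123 =
    !![0,0,1,0,0,0,0; 1,0,0,0,0,0,0; 0,1,0,0,0,0,0; 0,0,0,1,0,0,0;
       0,0,0,0,1,0,0; 0,0,0,0,0,1,0; 0,0,0,0,0,0,1] := by
  ext i j
  fin_cases i <;> fin_cases j <;>
    simp [pm, c123, Equiv.swap_apply_def, Matrix.vecHead, Matrix.vecTail] <;>
    norm_num [Fin.ext_iff]

lemma pm_56 : pm (Equiv.swap 5 6) =
    !![1,0,0,0,0,0,0; 0,1,0,0,0,0,0; 0,0,1,0,0,0,0; 0,0,0,1,0,0,0;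
       0,0,0,0,1,0,0; 0,0,0,0,0,0,1; 0,0,0,0,0,1,0] := by
  ext i j
  fin_cases i <;> fin_cases j <;>
    simp [pm, Equiv.swap_apply_def, Matrix.vecHead, Matrix.vecTail] <;>
    norm_num [Fin.ext_iff]

noncomputable def Mexp : Matrix (Fin 7) (Fin 7) ℂ :=
  !![0,0,-1,0,0,0,1;
     1,0,0,0,0,0,0;
     0,1,0,0,0,0,0;
     0,0,0,-1,0,0,1;
     0,0,-1,-1,1,0,1;
     0,0,0,0,0,0,1;
     0,0,-1,-1,0,1,1]

noncomputable def M2exp : Matrix (Fin 7) (Fin 7) ℂ :=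
  !![0,-1,-1,-1,0,1,1;
     0,0,-1,0,0,0,1;
     1,0,0,0,0,0,0;
     0,0,-1,0,0,1,0;
     0,-1,-2,-1,1,1,1;
     0,0,-1,-1,0,1,1;
     0,-1,-1,0,0,1,1]

noncomputable def Bexp : Matrix (Fin 7) (Fin 7) ℂ :=
  !![-1,-1,0,-1,0,1,1;
     -1,-1,-1,0,0,1,1;
     0,-1,-1,-1,0,1,1;
     -1,0,-1,-1,0,1,1;
     -2,-2,-2,-2,1,2,2;
     -1,-1,-1,-1,0,1,2;
     -1,-1,-1,-1,0,2,1]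

lemma M_eq : pm c123 * pm (Equiv.swap 5 6) * Amat = Mexp := by
  rw [pm_c123, pm_56]
  ext i j
  fin_cases i <;> fin_cases j <;>
    simp [Amat, Mexp, Matrix.mul_apply, Fin.sum_univ_seven,
      Matrix.vecHead, Matrix.vecTail] <;> norm_num

lemma M2_eq : Mexp * Mexp = M2exp := by
  ext i j
  fin_cases i <;> fin_cases j <;>
    simp [Mexp, M2exp, Matrix.mul_apply, Fin.sum_univ_seven,
      Matrix.vecHead, Matrix.vecTail] <;> norm_num

lemma B_eq : Bmat = Bexp := by
  have h2 : Mexp ^ 2 = M2exp := by rw [sq]; exact M2_eq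
  rw [Bmat, M_eq, show (4:ℕ) = 2*2 by rfl, pow_mul, h2, sq]
  ext i j
  fin_cases i <;> fin_cases j <;>
    simp [M2exp, Bexp, Matrix.mul_apply, Fin.sum_univ_seven,
      Matrix.vecHead, Matrix.vecTail] <;> norm_num

lemma B_sq : Bmat * Bmat = 1 := by
  rw [B_eq]
  ext i j
  fin_cases i <;> fin_cases j <;>
    simp [Bexp, Matrix.mul_apply, Fin.sum_univ_seven, Matrix.one_apply,
      Matrix.vecHead, Matrix.vecTail] <;> norm_num [Fin.ext_iff]


/-- On the Saalschützian hyperplane, `[(123)(67)A]⁴` represents the transformation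
`(a,b,c,d,e,f,g) ↦ (1+c-e,1+d-e,1+a-e,1+b-e,2-e,1+g-e,1+f-e)` up to a permutation of
the first four coordinates and of the last two; in particular its square lies in `Σ`. -/
theorem Bmat_represents :
    (∃ σ ∈ SigmaL, ∀ x : Fin 7 → ℂ, sfun x = 1 → Bmat.mulVec x = σ.mulVec (Tmap x)) ∧
    Bmat * Bmat ∈ SigmaL := by
  refine ⟨⟨1, one_mem _, fun x hx => ?_⟩, B_sq ▸ one_mem _⟩
  rw [B_eq, Matrix.one_mulVec]
  have h : x 4 + x 5 + x 6 - x 0 - x 1 - x 2 - x 3 = 1 := hx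
  funext i
  fin_cases i <;>
    simp [Bexp, Tmap, Matrix.mulVec, dotProduct, Fin.sum_univ_seven,
      Matrix.vecHead, Matrix.vecTail] <;>
    first
      | linear_combination h
      | linear_combination (2:ℂ) * h
end
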